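/- arXiv:math/0506491 — 7 statements merged into one kernel-verified Lean document; each statement's English description precedes it below -/
import Mathlib

section
/- Let H = (H^A ⊗ H^B) ⊕ K be a fixed decomposition of a finite-dimensional Hilbert space and let E be a quantum operation (CPTP map) on B(H). Then the following three conditions are equivalent: (1) for all σ^A ∈ B(H^A) and all σ^B ∈ B(H^B) there exists τ^A ∈ B(H^A) such that E(σ^A ⊗ σ^B) = τ^A ⊗ σ^B; (2) for all σ^B ∈ B(H^B) there exists τ^A ∈ B(H^A) such that E(1^A ⊗ σ^B) = τ^A ⊗ σ^B; (3) for all σ in the semigroup 𝔄, (Tr_A ∘ 𝒫_𝔄 ∘ E)(σ) = Tr_A(σ). -/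
open scoped Kronecker Matrix

set_option maxHeartbeats 1000000
noncomputable section

abbrev HIdx (m n p : ℕ) : Type := (Fin m × Fin n) ⊕ Fin p

def embed {m n p : ℕ} (M : Matrix (Fin m × Fin n) (Fin m × Fin n) ℂ) :
    Matrix (HIdx m n p) (HIdx m n p) ℂ :=
  Matrix.fromBlocks M 0 0 0

def PA (m n p : ℕ) : Matrix (HIdx m n p) (HIdx m n p) ℂ :=
  embed 1

def Pmu {m : ℕ} (n p : ℕ) (k l : Fin m) : Matrix (HIdx m n p) (HIdx m n p) ℂ :=
  embed (Matrix.single k l (1 : ℂ) ⊗ₖ (1 : Matrix (Fin n) (Fin n) ℂ))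

def trA {m n p : ℕ} (M : Matrix (HIdx m n p) (HIdx m n p) ℂ) :
    Matrix (Fin n) (Fin n) ℂ :=
  Matrix.of fun i j => ∑ k : Fin m, M (Sum.inl (k, i)) (Sum.inl (k, j))

def IsQuantumOperation {d : Type} [Fintype d] [DecidableEq d]
    (E : Matrix d d ℂ →ₗ[ℂ] Matrix d d ℂ) : Prop :=
  ∃ (ι : Type) (_ : Fintype ι) (K : ι → Matrix d d ℂ),
    (∀ ρ, E ρ = ∑ a, K a * ρ * (K a)ᴴ) ∧ ∑ a, (K a)ᴴ * K a = 1

namespace NS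

variable {m n p : ℕ}

lemma embed_ll (M : Matrix (Fin m × Fin n) (Fin m × Fin n) ℂ) (x y) :
    embed (p := p) M (Sum.inl x) (Sum.inl y) = M x y := rfl

lemma embed_lr (M : Matrix (Fin m × Fin n) (Fin m × Fin n) ℂ) (x q) :
    embed (p := p) M (Sum.inl x) (Sum.inr q) = 0 := rfl

lemma embed_rl (M : Matrix (Fin m × Fin n) (Fin m × Fin n) ℂ) (q y) :
    embed (p := p) M (Sum.inr q) (Sum.inl y) = 0 := rfl

lemma embed_rr (M : Matrix (Fin m × Fin n) (Fin m × Fin n) ℂ) (q q') :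
    embed (p := p) M (Sum.inr q) (Sum.inr q') = 0 := rfl

lemma embed_mul (M N : Matrix (Fin m × Fin n) (Fin m × Fin n) ℂ) :
    embed (p := p) M * embed N = embed (M * N) := by
  simp [embed, Matrix.fromBlocks_multiply]

lemma embed_conjT (M : Matrix (Fin m × Fin n) (Fin m × Fin n) ℂ) :
    (embed (p := p) M)ᴴ = embed Mᴴ := by
  ext i j
  rcases i with x | q <;> rcases j with y | q' <;>
    simp [embed, Matrix.conjTranspose_apply]

lemma embed_sum {ι : Type} [Fintype ι] (f : ι → Matrix (Fin m × Fin n) (Fin m × Fin n) ℂ) :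
    embed (p := p) (∑ a, f a) = ∑ a, embed (f a) := by
  ext i j
  rcases i with x | q <;> rcases j with y | q' <;>
    simp [embed, Matrix.sum_apply]

lemma PA_mul_embed (M : Matrix (Fin m × Fin n) (Fin m × Fin n) ℂ) :
    PA m n p * embed M = embed M := by
  rw [PA, embed_mul, one_mul]

lemma embed_mul_PA (M : Matrix (Fin m × Fin n) (Fin m × Fin n) ℂ) :
    embed M * PA m n p = embed M := by
  rw [PA, embed_mul, mul_one]

lemma PA_conjT : (PA m n p)ᴴ = PA m n p := by
  rw [PA, embed_conjT, Matrix.conjTranspose_one]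

lemma kron_conjT (A : Matrix (Fin m) (Fin m) ℂ) (B : Matrix (Fin n) (Fin n) ℂ) :
    (A ⊗ₖ B)ᴴ = Aᴴ ⊗ₖ Bᴴ := by
  ext ⟨k, i⟩ ⟨l, s⟩
  simp [Matrix.conjTranspose_apply, Matrix.kroneckerMap_apply]

lemma sum_kron {ι : Type} [Fintype ι] (f : ι → Matrix (Fin m) (Fin m) ℂ)
    (B : Matrix (Fin n) (Fin n) ℂ) :
    (∑ a, f a) ⊗ₖ B = ∑ a, f a ⊗ₖ B := by
  ext ⟨k, i⟩ ⟨l, s⟩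
  simp [Matrix.kroneckerMap_apply, Matrix.sum_apply, Finset.sum_mul]

def outer {d : Type} (x : d → ℂ) : Matrix d d ℂ :=
  Matrix.of fun i j => x i * (starRingEnd ℂ) (x j)

lemma outer_conj {d : Type} [Fintype d] (K : Matrix d d ℂ) (x : d → ℂ) :
    K * outer x * Kᴴ = outer (K.mulVec x) := by
  ext i j
  simp only [outer, Matrix.mul_apply, Matrix.conjTranspose_apply, Matrix.of_apply,
    Matrix.mulVec, dotProduct, map_sum, map_mul, Finset.sum_mul, Finset.mul_sum,
    Complex.star_def]
  apply Finset.sum_congr rfl; intro t _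
  apply Finset.sum_congr rfl; intro s _
  ring

lemma sum_mul_conj_eq_zero {ι : Type} [Fintype ι] {z : ι → ℂ}
    (h : ∑ a, z a * (starRingEnd ℂ) (z a) = 0) (a : ι) : z a = 0 := by
  have h1 : ∑ a, (Complex.normSq (z a) : ℂ) = 0 := by
    rw [← h]; exact Finset.sum_congr rfl fun a _ => (Complex.mul_conj (z a)).symm
  have h2 : ∑ a, Complex.normSq (z a) = 0 := by exact_mod_cast h1
  have h3 := (Finset.sum_eq_zero_iff_of_nonneg
    (fun a _ => Complex.normSq_nonneg (z a))).1 h2 a (Finset.mem_univ a)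
  exact Complex.normSq_eq_zero.mp h3

lemma double_sum_mul_conj_eq_zero {ι κ : Type} [Fintype ι] [Fintype κ] {z : ι → κ → ℂ}
    (h : ∑ a, ∑ k, z a k * (starRingEnd ℂ) (z a k) = 0) (a : ι) (k : κ) : z a k = 0 := by
  have h' : ∑ x : ι × κ, z x.1 x.2 * (starRingEnd ℂ) (z x.1 x.2) = 0 := by
    rw [Fintype.sum_prod_type]; exact h
  exact sum_mul_conj_eq_zero h' (a, k)

def vv (φ : Fin m → ℂ) (ψ : Fin n → ℂ) : HIdx m n p → ℂ :=
  Sum.elim (fun q => φ q.1 * ψ q.2) 0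

lemma embed_kron_outer (φ : Fin m → ℂ) (ψ : Fin n → ℂ) :
    embed (p := p) (outer φ ⊗ₖ outer ψ) = outer (vv φ ψ) := by
  ext i j
  rcases i with ⟨k, i⟩ | q <;> rcases j with ⟨l, s⟩ | q' <;>
    simp [embed, outer, vv, Matrix.kroneckerMap_apply] <;> ring

lemma one_eq_sum_outer :
    (1 : Matrix (Fin m) (Fin m) ℂ) = ∑ k, outer (Pi.single k (1 : ℂ)) := by
  ext i j
  simp [Matrix.sum_apply, outer, Pi.single_apply, Matrix.one_apply]

lemma vv_single (k : Fin m) (i : Fin n) :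
    vv (p := p) (Pi.single k (1 : ℂ)) (Pi.single i (1 : ℂ)) =
      Pi.single (Sum.inl (k, i) : HIdx m n p) (1 : ℂ) := by
  ext t
  rcases t with ⟨l, s⟩ | q
  · simp [vv, Pi.single_apply, Prod.ext_iff]
    by_cases h1 : l = k <;> by_cases h2 : s = i <;> simp [h1, h2]
  · simp [vv, Pi.single_apply]

lemma vv_add_right (φ : Fin m → ℂ) (ψ ψ' : Fin n → ℂ) :
    vv (p := p) φ (ψ + ψ') = vv φ ψ + vv φ ψ' := by
  ext t
  rcases t with ⟨l, s⟩ | q <;> simp [vv, mul_add]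

lemma trA_embed_kron (A : Matrix (Fin m) (Fin m) ℂ) (B : Matrix (Fin n) (Fin n) ℂ) :
    trA (embed (p := p) (A ⊗ₖ B)) = A.trace • B := by
  ext i j
  simp [trA, embed, Matrix.kroneckerMap_apply, Matrix.trace, Matrix.diag,
    Finset.sum_mul]

lemma PA_mul_apply (M : Matrix (HIdx m n p) (HIdx m n p) ℂ) (x) (j) :
    (PA m n p * M) (Sum.inl x) j = M (Sum.inl x) j := by
  rw [Matrix.mul_apply, Fintype.sum_sum_type]
  simp [PA, embed, Matrix.one_apply]

lemma mul_PA_apply (M : Matrix (HIdx m n p) (HIdx m n p) ℂ) (i) (y) :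
    (M * PA m n p) i (Sum.inl y) = M i (Sum.inl y) := by
  rw [Matrix.mul_apply, Fintype.sum_sum_type]
  simp [PA, embed, Matrix.one_apply]

lemma trA_PMP (M : Matrix (HIdx m n p) (HIdx m n p) ℂ) :
    trA (PA m n p * M * PA m n p) = trA M := by
  ext i j
  simp only [trA, Matrix.of_apply]
  exact Finset.sum_congr rfl fun k _ => by rw [mul_PA_apply, PA_mul_apply]

lemma trace_embed (M : Matrix (Fin m × Fin n) (Fin m × Fin n) ℂ) :
    (embed (p := p) M).trace = M.trace := by
  simp [Matrix.trace, Matrix.diag, Fintype.sum_sum_type, embed]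

lemma trace_outer_single (r : Fin m) :
    (outer (Pi.single r (1 : ℂ))).trace = 1 := by
  simp [Matrix.trace, Matrix.diag, outer, Pi.single_apply]

section Kraus

variable {ι : Type} [Fintype ι]
variable {E : Matrix (HIdx m n p) (HIdx m n p) ℂ →ₗ[ℂ] Matrix (HIdx m n p) (HIdx m n p) ℂ}
variable {K : ι → Matrix (HIdx m n p) (HIdx m n p) ℂ}

lemma E_outer (hKE : ∀ ρ, E ρ = ∑ a, K a * ρ * (K a)ᴴ) (φ : Fin m → ℂ) (ψ : Fin n → ℂ) :
    E (embed (outer φ ⊗ₖ outer ψ)) = ∑ a, outer ((K a).mulVec (vv φ ψ)) := by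
  rw [embed_kron_outer, hKE]
  exact Finset.sum_congr rfl fun a _ => outer_conj _ _

lemma E_one_outer (hKE : ∀ ρ, E ρ = ∑ a, K a * ρ * (K a)ᴴ) (ψ : Fin n → ℂ) :
    E (embed ((1 : Matrix (Fin m) (Fin m) ℂ) ⊗ₖ outer ψ)) =
      ∑ a, ∑ k, outer ((K a).mulVec (vv (Pi.single k 1) ψ)) := by
  have h1 : (1 : Matrix (Fin m) (Fin m) ℂ) ⊗ₖ outer ψ
      = ∑ k, outer (Pi.single k (1 : ℂ)) ⊗ₖ outer ψ := by
    rw [one_eq_sum_outer (m := m), sum_kron]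
  rw [h1, embed_sum, map_sum]
  rw [Finset.sum_comm]
  exact Finset.sum_congr rfl fun k _ => by
    rw [E_outer hKE]

lemma trace_E (hKE : ∀ ρ, E ρ = ∑ a, K a * ρ * (K a)ᴴ)
    (hTP : ∑ a, (K a)ᴴ * K a = 1) (ρ : Matrix (HIdx m n p) (HIdx m n p) ℂ) :
    (E ρ).trace = ρ.trace := by
  rw [hKE, Matrix.trace_sum]
  have h1 : ∀ a, (K a * ρ * (K a)ᴴ).trace = ((K a)ᴴ * K a * ρ).trace := by
    intro a; rw [Matrix.trace_mul_cycle]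
  rw [Finset.sum_congr rfl fun a _ => h1 a, ← Matrix.trace_sum, ← Finset.sum_mul, hTP, one_mul]

/-- Vanishing of a sum of diagonal entries of a sum of rank-one positives kills the vectors. -/
lemma vanish_diag {κ β : Type} [Fintype κ] [Fintype β]
    {M : Matrix (HIdx m n p) (HIdx m n p) ℂ} {w : κ → HIdx m n p → ℂ}
    (hMw : ∀ t t', M t t' = ∑ c, w c t * (starRingEnd ℂ) (w c t'))
    (g : β → HIdx m n p) (hT : ∑ b, M (g b) (g b) = 0) :
    ∀ c b, w c (g b) = 0 := by
  intro c b
  refine double_sum_mul_conj_eq_zero (z := fun b c => w c (g b)) ?_ b c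
  rw [← hT]
  exact Finset.sum_congr rfl fun b _ => (hMw (g b) (g b)).symm

lemma vanish_diff {κ β : Type} [Fintype κ] [Fintype β]
    {M : Matrix (HIdx m n p) (HIdx m n p) ℂ} {w : κ → HIdx m n p → ℂ}
    (hMw : ∀ t t', M t t' = ∑ c, w c t * (starRingEnd ℂ) (w c t'))
    (g h' : β → HIdx m n p)
    (hT : ∑ b, (M (g b) (g b) - M (g b) (h' b) - M (h' b) (g b) + M (h' b) (h' b)) = 0) :
    ∀ c b, w c (g b) = w c (h' b) := by
  intro c b
  have h := double_sum_mul_conj_eq_zero (z := fun b c => w c (g b) - w c (h' b)) ?_ b c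
  · exact sub_eq_zero.mp h
  · rw [← hT]
    apply Finset.sum_congr rfl; intro b _
    rw [hMw, hMw, hMw, hMw, ← Finset.sum_sub_distrib, ← Finset.sum_sub_distrib,
      ← Finset.sum_add_distrib]
    apply Finset.sum_congr rfl; intro c _
    simp only [map_sub]
    ring

end Kraus

section Kraus2

variable {ι : Type} [Fintype ι]
variable {E : Matrix (HIdx m n p) (HIdx m n p) ℂ →ₗ[ℂ] Matrix (HIdx m n p) (HIdx m n p) ℂ}
variable {K : ι → Matrix (HIdx m n p) (HIdx m n p) ℂ}

lemma hMw_of_two (hKE : ∀ ρ, E ρ = ∑ a, K a * ρ * (K a)ᴴ) {ψ : Fin n → ℂ}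
    {τ : Matrix (Fin m) (Fin m) ℂ}
    (hτ : E (embed ((1 : Matrix (Fin m) (Fin m) ℂ) ⊗ₖ outer ψ)) = embed (τ ⊗ₖ outer ψ)) :
    ∀ t t', embed (p := p) (τ ⊗ₖ outer ψ) t t' =
      ∑ c : ι × Fin m, (K c.1).mulVec (vv (Pi.single c.2 1) ψ) t *
        (starRingEnd ℂ) ((K c.1).mulVec (vv (Pi.single c.2 1) ψ) t') := by
  intro t t'
  rw [← hτ, E_one_outer hKE]
  simp [Matrix.sum_apply, outer, Fintype.sum_prod_type]

lemma facts_of_two (hKE : ∀ ρ, E ρ = ∑ a, K a * ρ * (K a)ᴴ)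
    (h2 : ∀ σB : Matrix (Fin n) (Fin n) ℂ, ∃ τA,
      E (embed ((1 : Matrix (Fin m) (Fin m) ℂ) ⊗ₖ σB)) = embed (τA ⊗ₖ σB)) :
    (∀ (a : ι) (k l : Fin m) (i s : Fin n), s ≠ i → K a (Sum.inl (l, s)) (Sum.inl (k, i)) = 0) ∧
    (∀ (a : ι) (k : Fin m) (i : Fin n) (q : Fin p), K a (Sum.inr q) (Sum.inl (k, i)) = 0) ∧
    (∀ (a : ι) (k l : Fin m) (i j : Fin n),
      K a (Sum.inl (l, i)) (Sum.inl (k, i)) = K a (Sum.inl (l, j)) (Sum.inl (k, j))) := by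
  have main : ∀ i : Fin n,
      (∀ (a : ι) (k l : Fin m) (s : Fin n), s ≠ i → K a (Sum.inl (l, s)) (Sum.inl (k, i)) = 0) ∧
      (∀ (a : ι) (k : Fin m) (q : Fin p), K a (Sum.inr q) (Sum.inl (k, i)) = 0) := by
    intro i
    obtain ⟨τ, hτ⟩ := h2 (outer (Pi.single i 1))
    have hMw := hMw_of_two hKE hτ
    constructor
    · intro a k l s hs
      have hT : ∑ l : Fin m, embed (p := p) (τ ⊗ₖ outer (Pi.single i (1:ℂ)))
          (Sum.inl (l, s)) (Sum.inl (l, s)) = 0 := by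
        simp [embed, outer, Matrix.kroneckerMap_apply, Pi.single_apply, hs]
      have h := vanish_diag hMw (fun l : Fin m => (Sum.inl (l, s) : HIdx m n p)) hT (a, k) l
      rw [vv_single, Matrix.mulVec_single] at h
      simpa using h
    · intro a k q
      have hT : ∑ q : Fin p, embed (p := p) (τ ⊗ₖ outer (Pi.single i (1:ℂ)))
          (Sum.inr q) (Sum.inr q) = 0 := by
        simp [embed]
      have h := vanish_diag hMw (fun q : Fin p => (Sum.inr q : HIdx m n p)) hT (a, k) q
      rw [vv_single, Matrix.mulVec_single] at h
      simpa using h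
  refine ⟨fun a k l i s hs => (main i).1 a k l s hs, fun a k i q => (main i).2 a k q, ?_⟩
  intro a k l i j
  by_cases hij : i = j
  · subst hij; rfl
  · obtain ⟨τ, hτ⟩ := h2 (outer (Pi.single i 1 + Pi.single j 1))
    have hMw := hMw_of_two hKE hτ
    have hT : ∑ l : Fin m,
        (embed (p := p) (τ ⊗ₖ outer (Pi.single i (1:ℂ) + Pi.single j 1))
            (Sum.inl (l, i)) (Sum.inl (l, i))
          - embed (p := p) (τ ⊗ₖ outer (Pi.single i (1:ℂ) + Pi.single j 1))
            (Sum.inl (l, i)) (Sum.inl (l, j))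
          - embed (p := p) (τ ⊗ₖ outer (Pi.single i (1:ℂ) + Pi.single j 1))
            (Sum.inl (l, j)) (Sum.inl (l, i))
          + embed (p := p) (τ ⊗ₖ outer (Pi.single i (1:ℂ) + Pi.single j 1))
            (Sum.inl (l, j)) (Sum.inl (l, j))) = 0 := by
      apply Finset.sum_eq_zero; intro l _
      simp only [embed_ll, Matrix.kroneckerMap_apply, outer, Matrix.of_apply,
        Pi.add_apply, Pi.single_apply, if_pos rfl, if_neg hij, if_neg (Ne.symm hij)]
      ring
    have h := vanish_diff hMw (fun l : Fin m => (Sum.inl (l, i) : HIdx m n p))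
      (fun l => (Sum.inl (l, j) : HIdx m n p)) hT (a, k) l
    rw [vv_add_right, Matrix.mulVec_add, vv_single, vv_single, Matrix.mulVec_single,
      Matrix.mulVec_single] at h
    have z1 : K a (Sum.inl (l, i)) (Sum.inl (k, j)) = 0 := (main j).1 a k l i hij
    have z2 : K a (Sum.inl (l, j)) (Sum.inl (k, i)) = 0 := (main i).1 a k l j (Ne.symm hij)
    simp only [Pi.add_apply, mul_one, z1, z2, add_zero, zero_add] at h
    simpa [z1, z2] using h

lemma facts_of_three (hKE : ∀ ρ, E ρ = ∑ a, K a * ρ * (K a)ᴴ)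
    (hTP : ∑ a, (K a)ᴴ * K a = 1)
    (h3 : ∀ σ : Matrix (HIdx m n p) (HIdx m n p) ℂ,
      (∃ (σA : Matrix (Fin m) (Fin m) ℂ) (σB : Matrix (Fin n) (Fin n) ℂ),
          σ = embed (σA ⊗ₖ σB)) →
      trA (PA m n p * E σ * PA m n p) = trA σ) :
    (∀ (a : ι) (k l : Fin m) (i s : Fin n), s ≠ i → K a (Sum.inl (l, s)) (Sum.inl (k, i)) = 0) ∧
    (∀ (a : ι) (k : Fin m) (i : Fin n) (q : Fin p), K a (Sum.inr q) (Sum.inl (k, i)) = 0) ∧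
    (∀ (a : ι) (k l : Fin m) (i j : Fin n),
      K a (Sum.inl (l, i)) (Sum.inl (k, i)) = K a (Sum.inl (l, j)) (Sum.inl (k, j))) := by
  have hEr : ∀ (r : Fin m) (ψ : Fin n → ℂ),
      trA (E (embed (outer (Pi.single r 1) ⊗ₖ outer ψ))) = outer ψ := by
    intro r ψ
    have h := h3 (embed (outer (Pi.single r 1) ⊗ₖ outer ψ)) ⟨_, _, rfl⟩
    rw [trA_PMP] at h
    rw [h, trA_embed_kron, trace_outer_single, one_smul]
  have hMw : ∀ (r : Fin m) (ψ : Fin n → ℂ) (t t' : HIdx m n p),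
      E (embed (outer (Pi.single r 1) ⊗ₖ outer ψ)) t t' =
        ∑ a, (K a).mulVec (vv (Pi.single r 1) ψ) t *
          (starRingEnd ℂ) ((K a).mulVec (vv (Pi.single r 1) ψ) t') := by
    intro r ψ t t'
    rw [E_outer hKE]
    simp [Matrix.sum_apply, outer]
  have esum : ∀ (r : Fin m) (ψ : Fin n → ℂ) (x y : Fin n),
      ∑ l : Fin m, E (embed (outer (Pi.single r 1) ⊗ₖ outer ψ)) (Sum.inl (l, x)) (Sum.inl (l, y))
        = outer ψ x y := by
    intro r ψ x y
    have h := congrArg (fun B => B x y) (hEr r ψ)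
    simpa [trA] using h
  have main : ∀ (i : Fin n) (k : Fin m),
      (∀ (a : ι) (l : Fin m) (s : Fin n), s ≠ i → K a (Sum.inl (l, s)) (Sum.inl (k, i)) = 0) ∧
      (∀ (a : ι) (q : Fin p), K a (Sum.inr q) (Sum.inl (k, i)) = 0) := by
    intro i k
    constructor
    · intro a l s hs
      have hT : ∑ l : Fin m, E (embed (outer (Pi.single k 1) ⊗ₖ outer (Pi.single i (1:ℂ))))
          (Sum.inl (l, s)) (Sum.inl (l, s)) = 0 := by
        rw [esum k (Pi.single i 1) s s]
        simp [outer, Pi.single_apply, hs]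
      have hMw1 := hMw k (Pi.single i (1:ℂ))
      have h := vanish_diag hMw1
        (fun l : Fin m => (Sum.inl (l, s) : HIdx m n p)) hT a l
      rw [vv_single, Matrix.mulVec_single] at h
      simpa using h
    · intro a q
      have h1 := trace_E hKE hTP (embed (outer (Pi.single k 1) ⊗ₖ outer (Pi.single i (1:ℂ))))
      have h2 : (E (embed (outer (Pi.single k 1) ⊗ₖ outer (Pi.single i (1:ℂ))))).trace
          = (∑ x : Fin m × Fin n,
              E (embed (outer (Pi.single k 1) ⊗ₖ outer (Pi.single i (1:ℂ))))
                (Sum.inl x) (Sum.inl x))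
            + ∑ q : Fin p,
              E (embed (outer (Pi.single k 1) ⊗ₖ outer (Pi.single i (1:ℂ))))
                (Sum.inr q) (Sum.inr q) := by
        simp [Matrix.trace, Matrix.diag, Fintype.sum_sum_type]
      have h3' : ∑ x : Fin m × Fin n,
          E (embed (outer (Pi.single k 1) ⊗ₖ outer (Pi.single i (1:ℂ))))
            (Sum.inl x) (Sum.inl x)
          = ∑ i' : Fin n, (outer (Pi.single i (1:ℂ)) : Matrix (Fin n) (Fin n) ℂ) i' i' := by
        rw [Fintype.sum_prod_type, Finset.sum_comm]
        exact Finset.sum_congr rfl fun i' _ => esum k (Pi.single i 1) i' i'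
      have h4 : (embed (p := p) (outer (Pi.single k (1:ℂ)) ⊗ₖ outer (Pi.single i (1:ℂ)))).trace
          = ∑ i' : Fin n, (outer (Pi.single i (1:ℂ)) : Matrix (Fin n) (Fin n) ℂ) i' i' := by
        rw [trace_embed, Matrix.trace_kronecker, trace_outer_single, one_mul]
        simp [Matrix.trace, Matrix.diag]
      have hT : ∑ q : Fin p,
          E (embed (outer (Pi.single k 1) ⊗ₖ outer (Pi.single i (1:ℂ))))
            (Sum.inr q) (Sum.inr q) = 0 := by
        rw [h2, h3'] at h1
        rw [h4] at h1
        linear_combination h1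
      have hMw1 := hMw k (Pi.single i (1:ℂ))
      have h := vanish_diag hMw1
        (fun q : Fin p => (Sum.inr q : HIdx m n p)) hT a q
      rw [vv_single, Matrix.mulVec_single] at h
      simpa using h
  refine ⟨fun a k l i s hs => (main i k).1 a l s hs, fun a k i q => (main i k).2 a q, ?_⟩
  intro a k l i j
  by_cases hij : i = j
  · subst hij; rfl
  · have hT : ∑ l : Fin m,
        (E (embed (outer (Pi.single k 1) ⊗ₖ outer (Pi.single i (1:ℂ) + Pi.single j 1)))
            (Sum.inl (l, i)) (Sum.inl (l, i))
          - E (embed (outer (Pi.single k 1) ⊗ₖ outer (Pi.single i (1:ℂ) + Pi.single j 1)))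
            (Sum.inl (l, i)) (Sum.inl (l, j))
          - E (embed (outer (Pi.single k 1) ⊗ₖ outer (Pi.single i (1:ℂ) + Pi.single j 1)))
            (Sum.inl (l, j)) (Sum.inl (l, i))
          + E (embed (outer (Pi.single k 1) ⊗ₖ outer (Pi.single i (1:ℂ) + Pi.single j 1)))
            (Sum.inl (l, j)) (Sum.inl (l, j))) = 0 := by
      rw [Finset.sum_add_distrib, Finset.sum_sub_distrib, Finset.sum_sub_distrib]
      rw [esum k _ i i, esum k _ i j, esum k _ j i, esum k _ j j]
      simp only [outer, Matrix.of_apply, Pi.add_apply, Pi.single_apply,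
        if_pos rfl, if_neg hij, if_neg (Ne.symm hij)]
      ring
    have hMw2 := hMw k (Pi.single i (1:ℂ) + Pi.single j 1)
    have h := vanish_diff hMw2
      (fun l : Fin m => (Sum.inl (l, i) : HIdx m n p))
      (fun l => (Sum.inl (l, j) : HIdx m n p)) hT a l
    rw [vv_add_right, Matrix.mulVec_add, vv_single, vv_single, Matrix.mulVec_single,
      Matrix.mulVec_single] at h
    have z1 : K a (Sum.inl (l, i)) (Sum.inl (k, j)) = 0 := (main j k).1 a l i hij
    have z2 : K a (Sum.inl (l, j)) (Sum.inl (k, i)) = 0 := (main i k).1 a l j (Ne.symm hij)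
    simp only [Pi.add_apply, mul_one, z1, z2, add_zero, zero_add] at h
    simpa [z1, z2] using h

end Kraus2


section Kraus3

variable {ι : Type} [Fintype ι]
variable {E : Matrix (HIdx m n p) (HIdx m n p) ℂ →ₗ[ℂ] Matrix (HIdx m n p) (HIdx m n p) ℂ}
variable {K : ι → Matrix (HIdx m n p) (HIdx m n p) ℂ}

/-- From the three column facts, each Kraus operator acts on the subspace as `F ⊗ 1`. -/
lemma KPA_eq (hn : 0 < n)
    (hA : ∀ (a : ι) (k l : Fin m) (i s : Fin n), s ≠ i →
      K a (Sum.inl (l, s)) (Sum.inl (k, i)) = 0)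
    (hB : ∀ (a : ι) (k : Fin m) (i : Fin n) (q : Fin p), K a (Sum.inr q) (Sum.inl (k, i)) = 0)
    (hC : ∀ (a : ι) (k l : Fin m) (i j : Fin n),
      K a (Sum.inl (l, i)) (Sum.inl (k, i)) = K a (Sum.inl (l, j)) (Sum.inl (k, j))) :
    ∀ a, K a * PA m n p =
      embed ((Matrix.of fun l k => K a (Sum.inl (l, ⟨0, hn⟩)) (Sum.inl (k, ⟨0, hn⟩)))
        ⊗ₖ (1 : Matrix (Fin n) (Fin n) ℂ)) := by
  intro a
  ext t j
  rcases j with ⟨k, i⟩ | q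
  · have hcol : (K a * PA m n p) t (Sum.inl (k, i)) = K a t (Sum.inl (k, i)) := by
      rw [Matrix.mul_apply, Fintype.sum_sum_type]
      simp [PA, embed, Matrix.one_apply]
    rw [hcol]
    rcases t with ⟨l, s⟩ | q'
    · rw [embed_ll]
      by_cases hsi : s = i
      · subst hsi
        simp only [Matrix.kroneckerMap_apply, Matrix.of_apply, Matrix.one_apply_eq]
        rw [mul_one]
        exact hC a k l s ⟨0, hn⟩
      · simp only [Matrix.kroneckerMap_apply, Matrix.of_apply, Matrix.one_apply_ne hsi,
          mul_zero]
        exact hA a k l i s hsi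
    · rw [embed_rl]
      exact hB a k i q'
  · have hcol : (K a * PA m n p) t (Sum.inr q) = 0 := by
      rw [Matrix.mul_apply, Fintype.sum_sum_type]
      simp [PA, embed]
    rw [hcol]
    rcases t with x | q' <;> simp [embed]

lemma E_embed_kron (hKE : ∀ ρ, E ρ = ∑ a, K a * ρ * (K a)ᴴ)
    (F : ι → Matrix (Fin m) (Fin m) ℂ)
    (hF : ∀ a, K a * PA m n p = embed (F a ⊗ₖ (1 : Matrix (Fin n) (Fin n) ℂ)))
    (σA : Matrix (Fin m) (Fin m) ℂ) (σB : Matrix (Fin n) (Fin n) ℂ) :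
    E (embed (σA ⊗ₖ σB)) = embed ((∑ a, F a * σA * (F a)ᴴ) ⊗ₖ σB) := by
  rw [hKE]
  have h1 : ∀ a, K a * embed (σA ⊗ₖ σB) * (K a)ᴴ
      = embed ((F a * σA * (F a)ᴴ) ⊗ₖ σB) := by
    intro a
    have e1 : K a * embed (σA ⊗ₖ σB) * (K a)ᴴ
        = (K a * PA m n p) * embed (σA ⊗ₖ σB) * (K a * PA m n p)ᴴ := by
      rw [Matrix.conjTranspose_mul, PA_conjT]
      rw [mul_assoc (K a) (PA m n p) (embed (σA ⊗ₖ σB)), PA_mul_embed]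
      rw [← mul_assoc (K a * embed (σA ⊗ₖ σB)) (PA m n p) ((K a)ᴴ),
        mul_assoc (K a) (embed (σA ⊗ₖ σB)) (PA m n p), embed_mul_PA]
    rw [e1, hF a, embed_conjT, embed_mul, embed_mul]
    rw [kron_conjT, Matrix.conjTranspose_one]
    congr 1
    rw [← Matrix.mul_kronecker_mul, ← Matrix.mul_kronecker_mul, one_mul, mul_one]
  rw [Finset.sum_congr rfl fun a _ => h1 a, ← embed_sum, sum_kron]

lemma sumFF (hTP : ∑ a, (K a)ᴴ * K a = 1) (hn : 0 < n)
    (F : ι → Matrix (Fin m) (Fin m) ℂ)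
    (hF : ∀ a, K a * PA m n p = embed (F a ⊗ₖ (1 : Matrix (Fin n) (Fin n) ℂ))) :
    ∑ a, (F a)ᴴ * F a = 1 := by
  have h1 : ∑ a, (K a * PA m n p)ᴴ * (K a * PA m n p) = PA m n p := by
    have e : ∀ a, (K a * PA m n p)ᴴ * (K a * PA m n p)
        = PA m n p * ((K a)ᴴ * K a) * PA m n p := by
      intro a
      rw [Matrix.conjTranspose_mul, PA_conjT]
      rw [mul_assoc (PA m n p) ((K a)ᴴ) (K a * PA m n p), ← mul_assoc ((K a)ᴴ) (K a) (PA m n p),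
        ← mul_assoc (PA m n p) ((K a)ᴴ * K a) (PA m n p)]
    rw [Finset.sum_congr rfl fun a _ => e a]
    have : ∑ a, PA m n p * ((K a)ᴴ * K a) * PA m n p
        = PA m n p * (∑ a, (K a)ᴴ * K a) * PA m n p := by
      rw [Finset.mul_sum, Finset.sum_mul]
    rw [this, hTP, mul_one, PA, embed_mul, one_mul]
  have h2 : ∀ a, (K a * PA m n p)ᴴ * (K a * PA m n p)
      = embed (((F a)ᴴ * F a) ⊗ₖ (1 : Matrix (Fin n) (Fin n) ℂ)) := by
    intro a
    rw [hF a, embed_conjT, embed_mul, kron_conjT, Matrix.conjTranspose_one,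
      ← Matrix.mul_kronecker_mul, one_mul]
  rw [Finset.sum_congr rfl fun a _ => h2 a, ← embed_sum, ← sum_kron] at h1
  ext k l
  have h3 := congrArg (fun M => M (Sum.inl (k, (⟨0, hn⟩ : Fin n))) (Sum.inl (l, ⟨0, hn⟩))) h1
  simp only [PA, embed_ll, Matrix.kroneckerMap_apply, Matrix.one_apply_eq, mul_one] at h3
  rw [h3]
  by_cases hkl : k = l
  · subst hkl; simp [Matrix.one_apply]
  · rw [Matrix.one_apply_ne hkl, Matrix.one_apply_ne (by simp [Prod.ext_iff, hkl])]

end Kraus3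

end NS

open NS

/-- Lemma 1 (noiseless subsystems): for a CPTP map `E` on `B(H)`,
`H = (H^A ⊗ H^B) ⊕ K`, conditions (1), (2), (3) are equivalent. -/
theorem noiseless_subsystem_tfae {m n p : ℕ}
    (E : Matrix (HIdx m n p) (HIdx m n p) ℂ →ₗ[ℂ] Matrix (HIdx m n p) (HIdx m n p) ℂ)
    (hE : IsQuantumOperation E) :
    ((∀ σA : Matrix (Fin m) (Fin m) ℂ, ∀ σB : Matrix (Fin n) (Fin n) ℂ,
        ∃ τA : Matrix (Fin m) (Fin m) ℂ,
          E (embed (σA ⊗ₖ σB)) = embed (τA ⊗ₖ σB)) ↔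
      (∀ σB : Matrix (Fin n) (Fin n) ℂ, ∃ τA : Matrix (Fin m) (Fin m) ℂ,
          E (embed ((1 : Matrix (Fin m) (Fin m) ℂ) ⊗ₖ σB)) = embed (τA ⊗ₖ σB)))
    ∧
    ((∀ σB : Matrix (Fin n) (Fin n) ℂ, ∃ τA : Matrix (Fin m) (Fin m) ℂ,
          E (embed ((1 : Matrix (Fin m) (Fin m) ℂ) ⊗ₖ σB)) = embed (τA ⊗ₖ σB)) ↔
      (∀ σ : Matrix (HIdx m n p) (HIdx m n p) ℂ,
        (∃ (σA : Matrix (Fin m) (Fin m) ℂ) (σB : Matrix (Fin n) (Fin n) ℂ),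
            σ = embed (σA ⊗ₖ σB)) →
        trA (PA m n p * E σ * PA m n p) = trA σ)) := by
  obtain ⟨ι, hι, K, hKE, hTP⟩ := hE
  letI := hι
  rcases Nat.eq_zero_or_pos n with hn | hn
  · subst hn
    have hz : ∀ M : Matrix (Fin m × Fin 0) (Fin m × Fin 0) ℂ, embed (p := p) M = 0 := by
      intro M
      ext t j
      rcases t with ⟨l, s⟩ | q
      · exact s.elim0
      · rcases j with ⟨l, s⟩ | q'
        · exact s.elim0
        · rfl
    have hE0 : ∀ M : Matrix (Fin m × Fin 0) (Fin m × Fin 0) ℂ,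
        E (embed (p := p) M) = 0 := fun M => by rw [hz, map_zero]
    refine ⟨⟨fun _ σB => ⟨1, by rw [hE0, hz]⟩, fun _ σA σB => ⟨1, by rw [hE0, hz]⟩⟩,
      ⟨fun _ σ _ => ?_, fun _ σB => ⟨1, by rw [hE0, hz]⟩⟩⟩
    ext i j
    exact i.elim0
  · have ext2to : (∀ σB : Matrix (Fin n) (Fin n) ℂ, ∃ τA,
        E (embed ((1 : Matrix (Fin m) (Fin m) ℂ) ⊗ₖ σB)) = embed (τA ⊗ₖ σB)) →
        ∃ F : ι → Matrix (Fin m) (Fin m) ℂ,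
          ∀ a, K a * PA m n p = embed (F a ⊗ₖ (1 : Matrix (Fin n) (Fin n) ℂ)) := by
      intro h2
      obtain ⟨hA, hB, hC⟩ := facts_of_two hKE h2
      exact ⟨fun a => Matrix.of fun l k => K a (Sum.inl (l, ⟨0, hn⟩)) (Sum.inl (k, ⟨0, hn⟩)),
        KPA_eq hn hA hB hC⟩
    have ext3to : (∀ σ : Matrix (HIdx m n p) (HIdx m n p) ℂ,
        (∃ (σA : Matrix (Fin m) (Fin m) ℂ) (σB : Matrix (Fin n) (Fin n) ℂ),
            σ = embed (σA ⊗ₖ σB)) →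
        trA (PA m n p * E σ * PA m n p) = trA σ) →
        ∃ F : ι → Matrix (Fin m) (Fin m) ℂ,
          ∀ a, K a * PA m n p = embed (F a ⊗ₖ (1 : Matrix (Fin n) (Fin n) ℂ)) := by
      intro h3
      obtain ⟨hA, hB, hC⟩ := facts_of_three hKE hTP h3
      exact ⟨fun a => Matrix.of fun l k => K a (Sum.inl (l, ⟨0, hn⟩)) (Sum.inl (k, ⟨0, hn⟩)),
        KPA_eq hn hA hB hC⟩
    have to1 : (∃ F : ι → Matrix (Fin m) (Fin m) ℂ,
        ∀ a, K a * PA m n p = embed (F a ⊗ₖ (1 : Matrix (Fin n) (Fin n) ℂ))) →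
        ∀ σA σB, ∃ τA, E (embed (σA ⊗ₖ σB)) = embed (τA ⊗ₖ σB) := by
      rintro ⟨F, hF⟩ σA σB
      exact ⟨_, E_embed_kron hKE F hF σA σB⟩
    have to3 : (∃ F : ι → Matrix (Fin m) (Fin m) ℂ,
        ∀ a, K a * PA m n p = embed (F a ⊗ₖ (1 : Matrix (Fin n) (Fin n) ℂ))) →
        ∀ σ : Matrix (HIdx m n p) (HIdx m n p) ℂ,
        (∃ (σA : Matrix (Fin m) (Fin m) ℂ) (σB : Matrix (Fin n) (Fin n) ℂ),
            σ = embed (σA ⊗ₖ σB)) →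
        trA (PA m n p * E σ * PA m n p) = trA σ := by
      rintro ⟨F, hF⟩ σ ⟨σA, σB, rfl⟩
      rw [trA_PMP, E_embed_kron hKE F hF, trA_embed_kron, trA_embed_kron]
      congr 1
      rw [Matrix.trace_sum]
      have e : ∀ a, (F a * σA * (F a)ᴴ).trace = ((F a)ᴴ * F a * σA).trace :=
        fun a => Matrix.trace_mul_cycle _ _ _
      rw [Finset.sum_congr rfl fun a _ => e a, ← Matrix.trace_sum, ← Finset.sum_mul,
        sumFF hTP hn F hF, one_mul]
    exact ⟨⟨fun h1 σB => h1 1 σB, fun h2 => to1 (ext2to h2)⟩,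
      ⟨fun h2 => to3 (ext2to h2), fun h3 σB => to1 (ext3to h3) 1 σB⟩⟩
end
end

section
/- Let H = (H^A ⊗ H^B) ⊕ K be a fixed decomposition of a finite-dimensional Hilbert space and let E = {E_a} be a quantum operation on B(H) with Kraus operators E_a. Then the following are equivalent: (1) the H^B sector of 𝔄 encodes a noiseless subsystem for E, i.e. for all σ^B ∈ B(H^B) there exists τ^A ∈ B(H^A) with E(1^A ⊗ σ^B) = τ^A ⊗ σ^B; (2) the subspace P_𝔄 H = H^A ⊗ H^B is invariant for each operator E_a and the restriction of each E_a to H^A ⊗ H^B belongs to the algebra B(H^A) ⊗ 1^B; (3) there exist scalars λ_{akl} such that P_k E_a P_l = λ_{akl} P_{kl} for all a, k, l, and E_a P_𝔄 = P_𝔄 E_a P_𝔄 for all a. -/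
open scoped Kronecker Matrix

noncomputable section

namespace NSaux
variable {m n p : ℕ}

lemma embed_mul (M N : Matrix (Fin m × Fin n) (Fin m × Fin n) ℂ) :
    embed (p := p) M * embed N = embed (M * N) := by
  unfold embed
  rw [Matrix.fromBlocks_multiply]
  simp

lemma embed_conjT (M : Matrix (Fin m × Fin n) (Fin m × Fin n) ℂ) :
    (embed (p := p) M)ᴴ = embed Mᴴ := by
  unfold embed
  rw [Matrix.fromBlocks_conjTranspose]
  simp

@[simp] lemma embed_apply_ll (M : Matrix (Fin m × Fin n) (Fin m × Fin n) ℂ) (u w) :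
    embed (p := p) M (Sum.inl u) (Sum.inl w) = M u w := rfl

@[simp] lemma embed_apply_lr (M : Matrix (Fin m × Fin n) (Fin m × Fin n) ℂ) (u w) :
    embed (p := p) M (Sum.inl u) (Sum.inr w) = 0 := rfl

@[simp] lemma embed_apply_rl (M : Matrix (Fin m × Fin n) (Fin m × Fin n) ℂ) (u w) :
    embed (p := p) M (Sum.inr u) (Sum.inl w) = 0 := rfl

@[simp] lemma embed_apply_rr (M : Matrix (Fin m × Fin n) (Fin m × Fin n) ℂ) (u w) :
    embed (p := p) M (Sum.inr u) (Sum.inr w) = 0 := rfl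

lemma embed_smul (c : ℂ) (M : Matrix (Fin m × Fin n) (Fin m × Fin n) ℂ) :
    embed (p := p) (c • M) = c • embed M := by
  ext x y
  cases x <;> cases y <;> simp

lemma embed_sum {κ : Type*} (s : Finset κ) (f : κ → Matrix (Fin m × Fin n) (Fin m × Fin n) ℂ) :
    embed (p := p) (∑ i ∈ s, f i) = ∑ i ∈ s, embed (f i) := by
  ext x y
  cases x <;> cases y <;> simp [Matrix.sum_apply]

lemma embed_inj {M N : Matrix (Fin m × Fin n) (Fin m × Fin n) ℂ}
    (h : embed (p := p) M = embed N) : M = N := by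
  ext u w
  have := congrFun (congrFun h (Sum.inl u)) (Sum.inl w)
  simpa using this

lemma PA_mul_embed (M : Matrix (Fin m × Fin n) (Fin m × Fin n) ℂ) :
    PA m n p * embed M = embed M := by
  rw [PA, embed_mul, one_mul]

lemma embed_mul_PA (M : Matrix (Fin m × Fin n) (Fin m × Fin n) ℂ) :
    embed M * PA m n p = embed M := by
  rw [PA, embed_mul, mul_one]

lemma PA_conj_eq (X : Matrix (HIdx m n p) (HIdx m n p) ℂ) :
    PA m n p * X * PA m n p = embed X.toBlocks₁₁ := by
  rw [← Matrix.fromBlocks_toBlocks X]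
  unfold PA embed
  rw [Matrix.fromBlocks_multiply, Matrix.fromBlocks_multiply]
  simp

lemma sum_sq_zero {ι d : Type} [Fintype ι] [Fintype d] [DecidableEq d]
    (S : ι → Matrix d d ℂ) (h : ∑ a, S a * (S a)ᴴ = 0) (a : ι) : S a = 0 := by
  ext i j
  have h1 : ∑ b, (S b * (S b)ᴴ) i i = 0 := by
    have := congrFun (congrFun h i) i
    simpa [Matrix.sum_apply] using this
  have h2 : ∑ b, ∑ k, ((Complex.normSq (S b i k) : ℝ) : ℂ) = 0 := by
    rw [← h1]
    refine Finset.sum_congr rfl fun b _ => ?_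
    simp only [Matrix.mul_apply, Matrix.conjTranspose_apply]
    exact Finset.sum_congr rfl fun k _ => (Complex.mul_conj _).symm
  have h3 : ∑ b, ∑ k, Complex.normSq (S b i k) = 0 := by
    have := h2
    push_cast at this
    exact_mod_cast this
  have h4 : ∀ b ∈ Finset.univ, ∑ k, Complex.normSq (S b i k) = 0 := by
    refine (Finset.sum_eq_zero_iff_of_nonneg fun b _ => ?_).mp h3
    exact Finset.sum_nonneg fun k _ => Complex.normSq_nonneg _
  have h5 := (Finset.sum_eq_zero_iff_of_nonneg fun k _ =>
      Complex.normSq_nonneg (S a i k)).mp (h4 a (Finset.mem_univ a)) j (Finset.mem_univ j)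
  simpa using Complex.normSq_eq_zero.mp h5


lemma key {ι : Type} [Fintype ι] (E : ι → Matrix (HIdx m n p) (HIdx m n p) ℂ)
    (ρ T : Matrix (Fin m × Fin n) (Fin m × Fin n) ℂ)
    (hρH : ρᴴ = ρ) (hρ2 : ρ * ρ = ρ)
    (hsum : ∑ a, E a * embed (p := p) ρ * (E a)ᴴ = embed T)
    (hT : ρ * T = T) (a : ι) :
    E a * embed (p := p) ρ = embed ρ * (E a * embed ρ) := by
  set R : Matrix (HIdx m n p) (HIdx m n p) ℂ := embed ρ with hR
  have hRH : Rᴴ = R := by rw [hR, embed_conjT, hρH]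
  have hR2 : R * R = R := by rw [hR, embed_mul, hρ2]
  set N : Matrix (HIdx m n p) (HIdx m n p) ℂ := 1 - R with hN
  have hNR : N * embed T = 0 := by
    rw [hN, Matrix.sub_mul, Matrix.one_mul, hR, embed_mul, hT, sub_self]
  have hz : ∑ b, (N * E b * R) * (N * E b * R)ᴴ = 0 := by
    have step : ∀ b, (N * E b * R) * (N * E b * R)ᴴ
        = N * (E b * R * (E b)ᴴ) * Nᴴ := by
      intro b
      simp only [Matrix.conjTranspose_mul, hRH, Matrix.mul_assoc]
      rw [← Matrix.mul_assoc R R, hR2]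
    calc ∑ b, (N * E b * R) * (N * E b * R)ᴴ
        = ∑ b, N * (E b * R * (E b)ᴴ) * Nᴴ := Finset.sum_congr rfl fun b _ => step b
      _ = N * (∑ b, E b * R * (E b)ᴴ) * Nᴴ := by rw [← Finset.sum_mul, ← Matrix.mul_sum]
      _ = N * embed T * Nᴴ := by rw [hsum]
      _ = 0 := by rw [hNR, Matrix.zero_mul]
  have h0 : N * E a * R = 0 := sum_sq_zero _ hz a
  have h1 : E a * R - R * (E a * R) = 0 := by
    calc E a * R - R * (E a * R) = (1 - R) * E a * R := by noncomm_ring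
    _ = 0 := h0
  exact sub_eq_zero.mp h1

lemma eig_all_scalar {n : ℕ} (A : Matrix (Fin n) (Fin n) ℂ)
    (h : ∀ v : Fin n → ℂ, ∃ c : ℂ, A.mulVec v = c • v) : ∃ c : ℂ, A = c • 1 := by
  rcases Nat.eq_zero_or_pos n with h0 | hpos
  · subst h0
    exact ⟨(0:ℂ), by ext i j; exact i.elim0⟩
  set e : Fin n → (Fin n → ℂ) := fun i => Pi.single i 1 with he
  obtain ⟨c, hc⟩ := Classical.axiomOfChoice h
  have hcol : ∀ i x : Fin n, A x i = c (e i) * e i x := by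
    intro i x
    have := congrFun (hc (e i)) x
    rw [he] at this ⊢
    simp only [Matrix.mulVec_single, MulOpposite.op_one, one_smul, Matrix.col_apply,
      Pi.smul_apply, smul_eq_mul] at this
    exact this
  have hceq : ∀ i j : Fin n, c (e i) = c (e j) := by
    intro i j
    rcases eq_or_ne i j with rfl | hij
    · rfl
    have hv := hc (e i + e j)
    have hi := congrFun hv i
    have hj := congrFun hv j
    rw [Matrix.mulVec_add] at hi hj
    have hmvi : ∀ x, A.mulVec (e i) x = A x i := by
      intro x; rw [he]; simp [Matrix.mulVec_single]
    have hmvj : ∀ x, A.mulVec (e j) x = A x j := by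
      intro x; rw [he]; simp [Matrix.mulVec_single]
    have hii : A i i = c (e i) := by rw [hcol i i, he]; simp
    have hij0 : A i j = 0 := by rw [hcol j i, he]; simp [Pi.single_eq_of_ne hij]
    have hjj : A j j = c (e j) := by rw [hcol j j, he]; simp
    have hji0 : A j i = 0 := by rw [hcol i j, he]; simp [Pi.single_eq_of_ne (Ne.symm hij)]
    have hei : e i i = 1 ∧ e i j = 0 ∧ e j j = 1 ∧ e j i = 0 := by
      rw [he]
      exact ⟨by simp, by simp [Pi.single_eq_of_ne (Ne.symm hij)], by simp,
        by simp [Pi.single_eq_of_ne hij]⟩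
    simp only [Pi.add_apply, Pi.smul_apply, smul_eq_mul, hmvi, hmvj,
      hei.1, hei.2.1, hei.2.2.1, hei.2.2.2] at hi hj
    rw [hii, hij0] at hi
    rw [hjj, hji0] at hj
    -- hi : c (e i) + 0 = c (e i + e j) * (1 + 0)
    -- hj : 0 + c (e j) = c (e i + e j) * (0 + 1)
    rw [add_zero, mul_add, mul_one, mul_zero, add_zero] at hi
    rw [zero_add, mul_add, mul_one, mul_zero, zero_add] at hj
    rw [hi, hj]
  refine ⟨c (e ⟨0, hpos⟩), ?_⟩
  ext x y
  rw [hcol y x, hceq y ⟨0, hpos⟩, he]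
  rcases eq_or_ne x y with rfl | hxy
  · simp [Matrix.one_apply]
  · simp [Matrix.one_apply, hxy, Pi.single_eq_of_ne hxy]
section Cond1
variable {m n p : ℕ} {ι : Type} [Fintype ι]

lemma one_kron_herm {σ : Matrix (Fin n) (Fin n) ℂ} (h : σᴴ = σ) :
    ((1 : Matrix (Fin m) (Fin m) ℂ) ⊗ₖ σ)ᴴ = (1 : Matrix (Fin m) (Fin m) ℂ) ⊗ₖ σ := by
  ext ⟨k, i⟩ ⟨l, j⟩
  have hσ : (starRingEnd ℂ) (σ j i) = σ i j := by
    conv_rhs => rw [← h]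
    rfl
  rcases eq_or_ne k l with rfl | hkl
  · simp [Matrix.conjTranspose_apply, Matrix.kroneckerMap_apply, Matrix.one_apply, hσ]
  · simp [Matrix.conjTranspose_apply, Matrix.kroneckerMap_apply, Matrix.one_apply, hkl,
      Ne.symm hkl]

lemma vvstar_herm (v : Fin n → ℂ) :
    (Matrix.vecMulVec v (star v))ᴴ = Matrix.vecMulVec v (star v) := by
  ext i j
  simp only [Matrix.conjTranspose_apply, Matrix.vecMulVec_apply, Pi.star_apply, star_mul',
    star_star]
  ring

lemma vvstar_mul (v : Fin n → ℂ) :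
    Matrix.vecMulVec v (star v) * Matrix.vecMulVec v (star v)
      = (star v ⬝ᵥ v) • Matrix.vecMulVec v (star v) := by
  ext i j
  simp only [Matrix.mul_apply, Matrix.vecMulVec_apply, Pi.star_apply, Matrix.smul_apply,
    dotProduct, smul_eq_mul]
  rw [Finset.sum_mul]
  refine Finset.sum_congr rfl fun x _ => ?_
  ring

lemma dot_self_ne_zero {v : Fin n → ℂ} (hv : v ≠ 0) : star v ⬝ᵥ v ≠ 0 := by
  have hr : star v ⬝ᵥ v = ((∑ i, Complex.normSq (v i) : ℝ) : ℂ) := by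
    push_cast
    refine Finset.sum_congr rfl fun i _ => ?_
    simp only [Pi.star_apply]
    rw [mul_comm]
    exact Complex.mul_conj _
  rw [hr]
  intro h0
  have : ∑ i, Complex.normSq (v i) = 0 := by exact_mod_cast h0
  have hz : ∀ i ∈ Finset.univ, Complex.normSq (v i) = 0 :=
    (Finset.sum_eq_zero_iff_of_nonneg fun i _ => Complex.normSq_nonneg _).mp this
  apply hv
  funext i
  simpa using Complex.normSq_eq_zero.mp (hz i (Finset.mem_univ i))

lemma conj_dot_self (v : Fin n → ℂ) : (starRingEnd ℂ) (star v ⬝ᵥ v) = star v ⬝ᵥ v := by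
  simp only [dotProduct, map_sum, Pi.star_apply, map_mul, Complex.conj_conj]
  refine Finset.sum_congr rfl fun i _ => ?_
  rw [Complex.star_def, Complex.conj_conj]
  ring

end Cond1

section Main
variable {m n p : ℕ} {ι : Type} [Fintype ι]

lemma star_dot_self (v : Fin n → ℂ) : star (star v ⬝ᵥ v) = star v ⬝ᵥ v := by
  simp only [dotProduct, star_sum, Pi.star_apply, star_mul', star_star]
  refine Finset.sum_congr rfl fun i _ => ?_
  ring

lemma block_scalar (E : ι → Matrix (HIdx m n p) (HIdx m n p) ℂ)
    (h1 : ∀ σB : Matrix (Fin n) (Fin n) ℂ, ∃ τA : Matrix (Fin m) (Fin m) ℂ,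
      ∑ a, E a * embed ((1 : Matrix (Fin m) (Fin m) ℂ) ⊗ₖ σB) * (E a)ᴴ = embed (τA ⊗ₖ σB))
    (a : ι) (k l : Fin m) :
    ∃ c : ℂ, (Matrix.of fun i j => E a (Sum.inl (k, i)) (Sum.inl (l, j)))
      = c • (1 : Matrix (Fin n) (Fin n) ℂ) := by
  set A : Matrix (Fin n) (Fin n) ℂ :=
    Matrix.of fun i j => E a (Sum.inl (k, i)) (Sum.inl (l, j)) with hA
  apply eig_all_scalar
  intro v
  rcases eq_or_ne v 0 with rfl | hv
  · exact ⟨0, by simp⟩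
  set r : ℂ := star v ⬝ᵥ v with hrdef
  have hr : r ≠ 0 := dot_self_ne_zero hv
  set σ : Matrix (Fin n) (Fin n) ℂ := r⁻¹ • Matrix.vecMulVec v (star v) with hσdef
  have hσH : σᴴ = σ := by
    rw [hσdef, Matrix.conjTranspose_smul, vvstar_herm]
    congr 1
    rw [star_inv₀, hrdef, star_dot_self]
  have hσ2 : σ * σ = σ := by
    rw [hσdef, Matrix.smul_mul, Matrix.mul_smul, vvstar_mul, ← hrdef, smul_smul, smul_smul,
      mul_assoc, inv_mul_cancel₀ hr, mul_one]
  obtain ⟨τ, hτ⟩ := h1 σ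
  have hρH : ((1 : Matrix (Fin m) (Fin m) ℂ) ⊗ₖ σ)ᴴ = 1 ⊗ₖ σ := one_kron_herm hσH
  have hρ2 : ((1 : Matrix (Fin m) (Fin m) ℂ) ⊗ₖ σ) * (1 ⊗ₖ σ) = 1 ⊗ₖ σ := by
    rw [← Matrix.mul_kronecker_mul, one_mul, hσ2]
  have hT : ((1 : Matrix (Fin m) (Fin m) ℂ) ⊗ₖ σ) * (τ ⊗ₖ σ) = τ ⊗ₖ σ := by
    rw [← Matrix.mul_kronecker_mul, one_mul, hσ2]
  have hEq := key E _ _ hρH hρ2 hτ hT a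
  obtain ⟨j₀, hj₀⟩ : ∃ j₀, v j₀ ≠ 0 := Function.ne_iff.mp hv
  set ρM : Matrix (HIdx m n p) (HIdx m n p) ℂ :=
    embed ((1 : Matrix (Fin m) (Fin m) ℂ) ⊗ₖ σ) with hρM
  set X : Matrix (HIdx m n p) (HIdx m n p) ℂ := E a * ρM with hX
  -- hEq : X = ρM * X
  have hL : ∀ (x : HIdx m n p) (l' : Fin m) (j : Fin n),
      X x (Sum.inl (l', j)) = ∑ j', E a x (Sum.inl (l', j')) * σ j' j := by
    intro x l' j
    rw [hX, Matrix.mul_apply, Fintype.sum_sum_type]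
    simp only [hρM, embed_apply_ll, embed_apply_rl, mul_zero, Finset.sum_const_zero, add_zero,
      Fintype.sum_prod_type, Matrix.kroneckerMap_apply, Matrix.one_apply, mul_ite, ite_mul,
      one_mul, zero_mul, mul_one]
    rw [Finset.sum_comm]
    simp [Finset.sum_ite_eq']
  have hLi : ∀ i' : Fin n,
      X (Sum.inl (k, i')) (Sum.inl (l, j₀))
        = r⁻¹ * (A.mulVec v i' * star (v j₀)) := by
    intro i'
    rw [hL]
    have : ∀ j', E a (Sum.inl (k, i')) (Sum.inl (l, j')) * σ j' j₀
        = r⁻¹ * (A i' j' * v j') * star (v j₀) := by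
      intro j'
      rw [hσdef]
      simp only [Matrix.smul_apply, Matrix.vecMulVec_apply, Pi.star_apply, smul_eq_mul, hA,
        Matrix.of_apply]
      ring
    rw [Finset.sum_congr rfl fun j' _ => this j']
    rw [Matrix.mulVec, dotProduct, ← Finset.sum_mul, ← Finset.mul_sum, mul_assoc]
  have hRnt : ∀ (y : HIdx m n p) (k' : Fin m) (i : Fin n),
      (ρM * X) (Sum.inl (k', i)) y = ∑ i', σ i i' * X (Sum.inl (k', i')) y := by
    intro y k' i
    rw [Matrix.mul_apply, Fintype.sum_sum_type]
    simp only [hρM, embed_apply_ll, embed_apply_rl, zero_mul, Finset.sum_const_zero, add_zero,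
      Fintype.sum_prod_type, Matrix.kroneckerMap_apply, Matrix.one_apply, ite_mul, mul_ite,
      one_mul, mul_zero]
    simp [Finset.sum_ite_eq, Finset.sum_ite_eq']
  set c : ℂ := r⁻¹ * (star v ⬝ᵥ A.mulVec v) with hc
  have hRi : ∀ i : Fin n,
      (ρM * X) (Sum.inl (k, i)) (Sum.inl (l, j₀))
        = r⁻¹ * ((c * v i) * star (v j₀)) := by
    intro i
    rw [hRnt]
    have hterm : ∀ i', σ i i' * X (Sum.inl (k, i')) (Sum.inl (l, j₀))
        = (r⁻¹ * (v i * star (v i'))) * (r⁻¹ * (A.mulVec v i' * star (v j₀))) := by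
      intro i'
      rw [hLi, hσdef]
      simp only [Matrix.smul_apply, Matrix.vecMulVec_apply, Pi.star_apply, smul_eq_mul]
    rw [Finset.sum_congr rfl fun i' _ => hterm i']
    rw [hc]
    simp only [dotProduct, Pi.star_apply, Finset.mul_sum, Finset.sum_mul]
    exact Finset.sum_congr rfl fun t _ => by ring
  refine ⟨c, funext fun i => ?_⟩
  have hent : X (Sum.inl (k, i)) (Sum.inl (l, j₀))
      = (ρM * X) (Sum.inl (k, i)) (Sum.inl (l, j₀)) := by
    rw [← hEq]
  rw [hLi i, hRi i] at hent
  have h2 := mul_left_cancel₀ (inv_ne_zero hr) hent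
  have h3 := mul_right_cancel₀ (star_ne_zero.mpr hj₀) h2
  simpa [Pi.smul_apply, smul_eq_mul] using h3

lemma PA_herm : (PA m n p)ᴴ = PA m n p := by
  rw [PA, embed_conjT, Matrix.conjTranspose_one]

lemma kron_conjT {q : ℕ} (A : Matrix (Fin m) (Fin m) ℂ) (B : Matrix (Fin q) (Fin q) ℂ) :
    (A ⊗ₖ B)ᴴ = Aᴴ ⊗ₖ Bᴴ := by
  ext ⟨k, i⟩ ⟨l, j⟩
  simp only [Matrix.conjTranspose_apply, Matrix.kroneckerMap_apply, star_mul']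

lemma std_conj (M : Matrix (Fin m) (Fin m) ℂ) (k l : Fin m) :
    Matrix.single k k (1 : ℂ) * M * Matrix.single l l 1
      = M k l • Matrix.single k l 1 := by
  ext i j
  simp only [Matrix.mul_apply, Matrix.single, Matrix.of_apply, Matrix.smul_apply,
    smul_eq_mul, ite_mul, mul_ite, one_mul, mul_one, zero_mul, mul_zero]
  rcases eq_or_ne k i with rfl | hk
  · rcases eq_or_ne l j with rfl | hl
    · simp
    · simp [Ne.symm hl, hl]
  · simp [Ne.symm hk, hk]

lemma sum_std_kron_one :
    ∑ k : Fin m, Matrix.single k k (1 : ℂ) ⊗ₖ (1 : Matrix (Fin n) (Fin n) ℂ)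
      = (1 : Matrix (Fin m × Fin n) (Fin m × Fin n) ℂ) := by
  ext ⟨k, i⟩ ⟨l, j⟩
  simp only [Matrix.sum_apply, Matrix.kroneckerMap_apply, Matrix.single,
    Matrix.of_apply, Matrix.one_apply, ite_mul, one_mul, zero_mul, Prod.mk.injEq]
  rcases eq_or_ne k l with rfl | hkl
  · simp [Finset.sum_ite_eq, eq_comm]
  · have : ∀ x : Fin m, ¬(x = k ∧ x = l) := by
      rintro x ⟨rfl, rfl⟩; exact hkl rfl
    simp only [this, if_false, Finset.sum_const_zero]
    simp [hkl]

lemma PA_eq_sum_Pmu : PA m n p = ∑ k : Fin m, Pmu n p k k := by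
  unfold PA Pmu
  rw [← embed_sum]
  rw [sum_std_kron_one]

lemma Pmu_mul_PA (k l : Fin m) : Pmu n p k l * PA m n p = Pmu n p k l := by
  rw [Pmu, PA, embed_mul, mul_one]

lemma PA_mul_Pmu (k l : Fin m) : PA m n p * Pmu n p k l = Pmu n p k l := by
  rw [Pmu, PA, embed_mul, one_mul]

end Main
end NSaux


open NSaux

/-- Theorem (testable conditions for a noiseless subsystem): for a quantum operation
`E = {E_a}` on `B(H)`, `H = (H^A ⊗ H^B) ⊕ K`, conditions (1), (2), (3) are equivalent. -/
theorem noiseless_subsystem_conditions {m n p : ℕ} {ι : Type} [Fintype ι]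
    (Eop : Matrix (HIdx m n p) (HIdx m n p) ℂ →ₗ[ℂ] Matrix (HIdx m n p) (HIdx m n p) ℂ)
    (E : ι → Matrix (HIdx m n p) (HIdx m n p) ℂ)
    (hKraus : ∀ ρ, Eop ρ = ∑ a, E a * ρ * (E a)ᴴ)
    (hTP : ∑ a, (E a)ᴴ * E a = 1) :
    -- (1) ↔ (2)
    ((∀ σB : Matrix (Fin n) (Fin n) ℂ, ∃ τA : Matrix (Fin m) (Fin m) ℂ,
        Eop (embed ((1 : Matrix (Fin m) (Fin m) ℂ) ⊗ₖ σB)) = embed (τA ⊗ₖ σB)) ↔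
      (∀ a, E a * PA m n p = PA m n p * E a * PA m n p ∧
        ∃ F : Matrix (Fin m) (Fin m) ℂ,
          PA m n p * E a * PA m n p = embed (F ⊗ₖ (1 : Matrix (Fin n) (Fin n) ℂ))))
    ∧
    -- (2) ↔ (3)
    ((∀ a, E a * PA m n p = PA m n p * E a * PA m n p ∧
        ∃ F : Matrix (Fin m) (Fin m) ℂ,
          PA m n p * E a * PA m n p = embed (F ⊗ₖ (1 : Matrix (Fin n) (Fin n) ℂ))) ↔
      ((∃ lam : ι → Fin m → Fin m → ℂ,
          ∀ a k l, Pmu n p k k * E a * Pmu n p l l = lam a k l • Pmu n p k l) ∧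
        (∀ a, E a * PA m n p = PA m n p * E a * PA m n p))) := by
  constructor
  · -- (1) ↔ (2)
    constructor
    · intro h1
      have h1' : ∀ σB : Matrix (Fin n) (Fin n) ℂ, ∃ τA : Matrix (Fin m) (Fin m) ℂ,
          ∑ a, E a * embed ((1 : Matrix (Fin m) (Fin m) ℂ) ⊗ₖ σB) * (E a)ᴴ
            = embed (τA ⊗ₖ σB) := by
        intro σB
        obtain ⟨τA, hτ⟩ := h1 σB
        exact ⟨τA, by rw [← hKraus]; exact hτ⟩
      intro a
      -- invariance
      have hinv : E a * PA m n p = PA m n p * E a * PA m n p := by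
        obtain ⟨τ, hτ⟩ := h1' 1
        rw [Matrix.one_kronecker_one] at hτ
        have hk := key E 1 (τ ⊗ₖ 1) (Matrix.conjTranspose_one) (one_mul 1) hτ (one_mul _) a
        rw [← PA] at hk
        rw [hk, Matrix.mul_assoc]
      refine ⟨hinv, ?_⟩
      choose c hc using block_scalar E h1' a
      refine ⟨Matrix.of c, ?_⟩
      rw [PA_conj_eq]
      refine congrArg embed ?_
      ext ⟨k, i⟩ ⟨l, j⟩
      have := congrFun (congrFun (hc k l) i) j
      simp only [Matrix.of_apply, Matrix.smul_apply, smul_eq_mul] at this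
      simp only [Matrix.toBlocks₁₁, Matrix.of_apply, Matrix.kroneckerMap_apply]
      exact this
    · intro h2 σB
      have hinv := fun a => (h2 a).1
      choose F hF using fun a => (h2 a).2
      have hEaPA : ∀ a, E a * PA m n p
          = embed (F a ⊗ₖ (1 : Matrix (Fin n) (Fin n) ℂ)) := by
        intro a; rw [hinv a, hF a]
      refine ⟨∑ a, F a * (F a)ᴴ, ?_⟩
      rw [hKraus]
      have hterm : ∀ a, E a * embed ((1 : Matrix (Fin m) (Fin m) ℂ) ⊗ₖ σB) * (E a)ᴴ
          = embed ((F a * (F a)ᴴ) ⊗ₖ σB) := by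
        intro a
        calc E a * embed ((1 : Matrix (Fin m) (Fin m) ℂ) ⊗ₖ σB) * (E a)ᴴ
            = E a * (PA m n p * embed ((1 : Matrix (Fin m) (Fin m) ℂ) ⊗ₖ σB) * PA m n p)
              * (E a)ᴴ := by rw [PA_mul_embed, embed_mul_PA]
          _ = (E a * PA m n p) * embed ((1 : Matrix (Fin m) (Fin m) ℂ) ⊗ₖ σB)
              * (PA m n p * (E a)ᴴ) := by noncomm_ring
          _ = (E a * PA m n p) * embed ((1 : Matrix (Fin m) (Fin m) ℂ) ⊗ₖ σB)
              * (E a * PA m n p)ᴴ := by rw [Matrix.conjTranspose_mul, PA_herm]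
          _ = embed (F a ⊗ₖ (1 : Matrix (Fin n) (Fin n) ℂ))
              * embed ((1 : Matrix (Fin m) (Fin m) ℂ) ⊗ₖ σB)
              * embed ((F a)ᴴ ⊗ₖ (1 : Matrix (Fin n) (Fin n) ℂ)) := by
                rw [hEaPA a, embed_conjT, kron_conjT, Matrix.conjTranspose_one]
          _ = embed ((F a * 1 * (F a)ᴴ) ⊗ₖ (1 * σB * 1)) := by
                rw [embed_mul, embed_mul, ← Matrix.mul_kronecker_mul,
                  ← Matrix.mul_kronecker_mul]
          _ = embed ((F a * (F a)ᴴ) ⊗ₖ σB) := by rw [mul_one, one_mul, mul_one]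
      rw [Finset.sum_congr rfl fun a _ => hterm a, ← embed_sum]
      refine congrArg embed ?_
      ext ⟨k, i⟩ ⟨l, j⟩
      simp [Matrix.sum_apply, Matrix.kroneckerMap_apply, Finset.sum_mul]
  · -- (2) ↔ (3)
    constructor
    · intro h2
      have hinv := fun a => (h2 a).1
      choose F hF using fun a => (h2 a).2
      refine ⟨⟨fun a k l => F a k l, ?_⟩, hinv⟩
      intro a k l
      have e1 : Pmu n p k k * PA m n p = Pmu n p k k := Pmu_mul_PA k k
      have e2 : PA m n p * Pmu n p l l = Pmu n p l l := PA_mul_Pmu l l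
      calc Pmu n p k k * E a * Pmu n p l l
          = (Pmu n p k k * PA m n p) * E a * (PA m n p * Pmu n p l l) := by rw [e1, e2]
        _ = Pmu n p k k * (PA m n p * E a * PA m n p) * Pmu n p l l := by noncomm_ring
        _ = Pmu n p k k * embed (F a ⊗ₖ (1 : Matrix (Fin n) (Fin n) ℂ)) * Pmu n p l l := by
              rw [hF a]
        _ = embed ((Matrix.single k k (1:ℂ) * F a * Matrix.single l l 1)
              ⊗ₖ ((1 : Matrix (Fin n) (Fin n) ℂ) * 1 * 1)) := by
              rw [Pmu, Pmu, embed_mul, embed_mul, ← Matrix.mul_kronecker_mul,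
                ← Matrix.mul_kronecker_mul]
        _ = F a k l • Pmu n p k l := by
              rw [std_conj, mul_one, mul_one, Matrix.smul_kronecker, embed_smul, Pmu]
    · rintro ⟨⟨lam, hlam⟩, hinv⟩ a
      refine ⟨hinv a, Matrix.of (lam a), ?_⟩
      calc PA m n p * E a * PA m n p
          = (∑ k, Pmu n p k k) * E a * (∑ l, Pmu n p l l) := by rw [← PA_eq_sum_Pmu]
        _ = ∑ k, ∑ l, Pmu n p k k * E a * Pmu n p l l := by
              rw [Finset.sum_mul, Finset.sum_mul]
              refine Finset.sum_congr rfl fun k _ => ?_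
              rw [Matrix.mul_sum]
        _ = ∑ k, ∑ l, lam a k l • Pmu n p k l := by
              exact Finset.sum_congr rfl fun k _ => Finset.sum_congr rfl fun l _ => hlam a k l
        _ = embed ((Matrix.of (lam a)) ⊗ₖ (1 : Matrix (Fin n) (Fin n) ℂ)) := by
              have hh : ∀ k l : Fin m, lam a k l • Pmu n p k l
                  = embed ((lam a k l • Matrix.single k l (1:ℂ))
                      ⊗ₖ (1 : Matrix (Fin n) (Fin n) ℂ)) := by
                intro k l
                rw [Pmu, Matrix.smul_kronecker, embed_smul]
              rw [Finset.sum_congr rfl fun k _ => Finset.sum_congr rfl fun l _ => hh k l]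
              rw [Finset.sum_congr rfl fun k _ => (embed_sum _ _).symm, ← embed_sum]
              refine congrArg embed ?_
              ext ⟨k, i⟩ ⟨l, j⟩
              simp only [Matrix.sum_apply, Matrix.kroneckerMap_apply, Matrix.smul_apply,
                Matrix.single, Matrix.of_apply, smul_eq_mul, ite_and, mul_ite, ite_mul,
                mul_one, mul_zero, zero_mul, Finset.sum_ite_irrel, Finset.sum_const_zero,
                Finset.sum_ite_eq, Finset.sum_ite_eq', Finset.mem_univ, if_true]
end
end

section
/- Let H = (H^A ⊗ H^B) ⊕ K be a fixed decomposition of a finite-dimensional Hilbert space and let E be a quantum operation on B(H). Then there exists a quantum operation R on B(H) such that (Tr_A ∘ 𝒫_𝔄 ∘ R ∘ E)(σ) = Tr_A(σ) for all σ ∈ 𝔄 (i.e. the H^B sector of 𝔄 is correctable for E) if and only if there exists a quantum operation R' on B(H) such that (R' ∘ E)(σ) = σ for every σ in the C*-algebra 1^A ⊗ B(H^B) ⊆ B(H). -/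
open scoped Kronecker Matrix

noncomputable section

namespace Corr

open Matrix Sum

variable {m n p : ℕ}

lemma embed_apply_inl_inl (M : Matrix (Fin m × Fin n) (Fin m × Fin n) ℂ) (x y) :
    (embed (p := p) M) (inl x) (inl y) = M x y := rfl

lemma embed_inj {M N : Matrix (Fin m × Fin n) (Fin m × Fin n) ℂ}
    (h : embed (p := p) M = embed N) : M = N := by
  ext x y
  have := congrFun (congrFun h (inl x)) (inl y)
  simpa [embed] using this

lemma embed_mul_embed (M N : Matrix (Fin m × Fin n) (Fin m × Fin n) ℂ) :
    embed (p := p) M * embed N = embed (M * N) := by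
  simp [embed, Matrix.fromBlocks_multiply]

lemma embed_conjT (M : Matrix (Fin m × Fin n) (Fin m × Fin n) ℂ) :
    (embed (p := p) M)ᴴ = embed Mᴴ := by
  simp [embed, Matrix.fromBlocks_conjTranspose]

lemma embed_mul_mul (M N : Matrix (Fin m × Fin n) (Fin m × Fin n) ℂ)
    (ρ : Matrix (HIdx m n p) (HIdx m n p) ℂ) :
    embed M * ρ * embed N = embed (M * ρ.toBlocks₁₁ * N) := by
  conv_lhs => rw [← Matrix.fromBlocks_toBlocks ρ]
  simp [embed, Matrix.fromBlocks_multiply]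

lemma embed_add (M N : Matrix (Fin m × Fin n) (Fin m × Fin n) ℂ) :
    embed (p := p) (M + N) = embed M + embed N := by
  ext (x|x) (y|y) <;> simp [embed, Matrix.fromBlocks]

lemma embed_smul (c : ℂ) (M : Matrix (Fin m × Fin n) (Fin m × Fin n) ℂ) :
    embed (p := p) (c • M) = c • embed M := by
  ext (x|x) (y|y) <;> simp [embed, Matrix.fromBlocks]

lemma embed_sum {ι : Type} [Fintype ι] (f : ι → Matrix (Fin m × Fin n) (Fin m × Fin n) ℂ) :
    embed (p := p) (∑ c, f c) = ∑ c, embed (f c) := by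
  ext (x|x) (y|y) <;> simp [embed, Matrix.fromBlocks, Matrix.sum_apply]

lemma trace_embed (M : Matrix (Fin m × Fin n) (Fin m × Fin n) ℂ) :
    (embed (p := p) M).trace = M.trace := by
  simp [embed, Matrix.trace, Matrix.diag, Fintype.sum_sum_type, Matrix.fromBlocks]

lemma trA_embed (X : Matrix (Fin m) (Fin m) ℂ) (Y : Matrix (Fin n) (Fin n) ℂ) :
    trA (embed (p := p) (X ⊗ₖ Y)) = X.trace • Y := by
  ext i j
  simp [trA, embed, Matrix.fromBlocks, Matrix.trace, Matrix.diag, Finset.sum_mul]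

lemma trA_sandwich (ρ : Matrix (HIdx m n p) (HIdx m n p) ℂ) :
    trA (PA m n p * ρ * PA m n p) = trA ρ := by
  have h : PA m n p * ρ * PA m n p = embed ρ.toBlocks₁₁ := by
    rw [PA, embed_mul_mul, Matrix.one_mul, Matrix.mul_one]
  rw [h]
  rfl

lemma trA_sum {ι : Type} [Fintype ι] (f : ι → Matrix (HIdx m n p) (HIdx m n p) ℂ) :
    trA (∑ c, f c) = ∑ c, trA (f c) := by
  ext i j
  simp only [trA, Matrix.of_apply, Matrix.sum_apply]
  exact Finset.sum_comm

lemma trace_trA (ρ : Matrix (HIdx m n p) (HIdx m n p) ℂ) :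
    (trA ρ).trace = ∑ x : Fin m × Fin n, ρ (inl x) (inl x) := by
  simp only [Matrix.trace, Matrix.diag, trA, Matrix.of_apply, Fintype.sum_prod_type]
  exact Finset.sum_comm


section General
variable {d : Type} [Fintype d] [DecidableEq d]

lemma trace_mul_conjT_nonneg (F : Matrix d d ℂ) :
    (F * Fᴴ).trace = ((∑ i, ∑ j, Complex.normSq (F i j) : ℝ) : ℂ) := by
  simp only [Matrix.trace, Matrix.diag, Matrix.mul_apply, Matrix.conjTranspose_apply]
  push_cast
  refine Finset.sum_congr rfl fun i _ => Finset.sum_congr rfl fun j _ => ?_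
  rw [Complex.star_def, Complex.mul_conj]

lemma eq_zero_of_sum_mul_conjT {ι : Type} [Fintype ι] (F : ι → Matrix d d ℂ)
    (h : ∑ c, F c * (F c)ᴴ = 0) : ∀ c, F c = 0 := by
  have h2 : ∑ c, ((∑ i, ∑ j, Complex.normSq (F c i j) : ℝ) : ℂ) = 0 := by
    simp_rw [← trace_mul_conjT_nonneg]
    rw [← Matrix.trace_sum, h, Matrix.trace_zero]
  have h3 : ∑ c, (∑ i, ∑ j, Complex.normSq (F c i j) : ℝ) = 0 := by
    exact_mod_cast h2
  intro c
  have hc : (∑ i, ∑ j, Complex.normSq (F c i j) : ℝ) = 0 := by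
    have := (Finset.sum_eq_zero_iff_of_nonneg (fun c _ => Finset.sum_nonneg fun i _ => Finset.sum_nonneg fun j _ => Complex.normSq_nonneg _)).mp h3
    exact this c (Finset.mem_univ c)
  ext i j
  have hij : Complex.normSq (F c i j) = 0 := by
    have h4 := (Finset.sum_eq_zero_iff_of_nonneg (fun i _ => Finset.sum_nonneg fun j _ => Complex.normSq_nonneg _)).mp hc i
      (Finset.mem_univ i)
    have h5 := (Finset.sum_eq_zero_iff_of_nonneg (fun j _ => Complex.normSq_nonneg _)).mp h4 j
      (Finset.mem_univ j)
    exact h5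
  simpa using Complex.normSq_eq_zero.mp hij

def krausMap {ι : Type} [Fintype ι] (K : ι → Matrix d d ℂ) :
    Matrix d d ℂ →ₗ[ℂ] Matrix d d ℂ where
  toFun ρ := ∑ a, K a * ρ * (K a)ᴴ
  map_add' x y := by
    simp [Matrix.mul_add, Matrix.add_mul, Finset.sum_add_distrib]
  map_smul' c x := by
    simp [Matrix.mul_smul, Matrix.smul_mul, Finset.smul_sum]

lemma krausMap_apply {ι : Type} [Fintype ι] (K : ι → Matrix d d ℂ) (ρ : Matrix d d ℂ) :
    krausMap K ρ = ∑ a, K a * ρ * (K a)ᴴ := rfl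

lemma krausMap_isQO {ι : Type} [Fintype ι] (K : ι → Matrix d d ℂ)
    (h : ∑ a, (K a)ᴴ * K a = 1) : IsQuantumOperation (krausMap K) :=
  ⟨ι, inferInstance, K, fun _ => rfl, h⟩

lemma _root_.IsQuantumOperation.comp {R S : Matrix d d ℂ →ₗ[ℂ] Matrix d d ℂ}
    (hR : IsQuantumOperation R) (hS : IsQuantumOperation S) :
    IsQuantumOperation (R ∘ₗ S) := by
  obtain ⟨ι₁, _, K₁, hK₁, hK₁'⟩ := hR
  obtain ⟨ι₂, _, K₂, hK₂, hK₂'⟩ := hS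
  refine ⟨ι₁ × ι₂, inferInstance, fun ab => K₁ ab.1 * K₂ ab.2, fun ρ => ?_, ?_⟩
  · rw [LinearMap.comp_apply, hK₁, hK₂]
    rw [Fintype.sum_prod_type]
    refine Finset.sum_congr rfl fun a _ => ?_
    rw [Finset.mul_sum, Finset.sum_mul]
    refine Finset.sum_congr rfl fun b _ => ?_
    simp only [Matrix.conjTranspose_mul]
    noncomm_ring
  · rw [Fintype.sum_prod_type]
    calc ∑ a, ∑ b, (K₁ a * K₂ b)ᴴ * (K₁ a * K₂ b)
        = ∑ b, ∑ a, (K₂ b)ᴴ * ((K₁ a)ᴴ * K₁ a) * K₂ b := by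
          rw [Finset.sum_comm]
          refine Finset.sum_congr rfl fun b _ => Finset.sum_congr rfl fun a _ => ?_
          simp only [Matrix.conjTranspose_mul]
          noncomm_ring
      _ = ∑ b, (K₂ b)ᴴ * (∑ a, (K₁ a)ᴴ * K₁ a) * K₂ b := by
          refine Finset.sum_congr rfl fun b _ => ?_
          rw [Finset.mul_sum, Finset.sum_mul]
      _ = 1 := by rw [hK₁']; simpa using hK₂'

lemma _root_.IsQuantumOperation.trace_eq {E : Matrix d d ℂ →ₗ[ℂ] Matrix d d ℂ}
    (hE : IsQuantumOperation E) (ρ : Matrix d d ℂ) : (E ρ).trace = ρ.trace := by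
  obtain ⟨ι, _, K, hK, hK'⟩ := hE
  rw [hK, Matrix.trace_sum]
  calc ∑ a, ((K a) * ρ * (K a)ᴴ).trace = ∑ a, ((K a)ᴴ * K a * ρ).trace := by
        exact Finset.sum_congr rfl fun a _ => by rw [Matrix.trace_mul_cycle]
    _ = ((∑ a, (K a)ᴴ * K a) * ρ).trace := by rw [Finset.sum_mul, Matrix.trace_sum]
    _ = ρ.trace := by rw [hK', Matrix.one_mul]

lemma stdBasis_conjT (a b : d) : (Matrix.single a b (1:ℂ))ᴴ = Matrix.single b a 1 := by
  ext x y
  simp only [Matrix.conjTranspose_apply, Matrix.single, Matrix.of_apply]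
  by_cases h1 : a = y <;> by_cases h2 : b = x <;> simp [h1, h2]

lemma std_sandwich (a b : d) (ρ : Matrix d d ℂ) :
    Matrix.single a b (1:ℂ) * ρ * (Matrix.single a b (1:ℂ))ᴴ
      = ρ b b • Matrix.single a a 1 := by
  rw [stdBasis_conjT, Matrix.mul_assoc]
  ext x y
  by_cases hx : a = x
  · subst hx
    by_cases hy : a = y
    · subst hy
      rw [Matrix.single_mul_apply_same, Matrix.mul_single_apply_same]
      simp
    · simp [Matrix.single_mul_apply_same, Ne.symm hy, hy]
  · simp [Ne.symm hx, hx]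

lemma sum_std_diag : ∑ a : d, Matrix.single a a (1:ℂ) = 1 := by
  ext x y
  rcases eq_or_ne x y with rfl | h
  · simp [Matrix.sum_apply, Matrix.single, Matrix.one_apply]
  · simp only [Matrix.sum_apply, Matrix.one_apply, if_neg h]
    exact Finset.sum_eq_zero fun t _ =>
      Matrix.single_apply_of_ne _ _ _ _ _ (fun hc => h (hc.1 ▸ hc.2))

end General

section Kron
variable {m n : ℕ}

lemma kron_conjT (A : Matrix (Fin m) (Fin m) ℂ) (B : Matrix (Fin n) (Fin n) ℂ) :
    (A ⊗ₖ B)ᴴ = Aᴴ ⊗ₖ Bᴴ := by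
  ext ⟨a, b⟩ ⟨c, e⟩
  simp [Matrix.conjTranspose_apply, Matrix.kroneckerMap_apply, mul_comm]

lemma kron_one_inj [NeZero n] {X Y : Matrix (Fin m) (Fin m) ℂ}
    (h : X ⊗ₖ (1 : Matrix (Fin n) (Fin n) ℂ) = Y ⊗ₖ 1) : X = Y := by
  ext k l
  have := congrFun (congrFun h (k, 0)) (l, 0)
  simpa [Matrix.kroneckerMap_apply] using this

lemma mul_kron_std_apply (G : Matrix (Fin m × Fin n) (Fin m × Fin n) ℂ) (u v : Fin n)
    (k l : Fin m) (i j : Fin n) :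
    (G * ((1 : Matrix (Fin m) (Fin m) ℂ) ⊗ₖ Matrix.single u v (1:ℂ))) (k, i) (l, j)
      = if j = v then G (k, i) (l, u) else 0 := by
  rw [Matrix.mul_apply]
  rw [Fintype.sum_prod_type]
  simp only [Matrix.kroneckerMap_apply, Matrix.one_apply, Matrix.single, Matrix.of_apply]
  rcases eq_or_ne j v with rfl | h
  · simp [Finset.sum_ite_eq', mul_comm, eq_comm]
  · rw [if_neg h]
    refine Finset.sum_eq_zero fun x _ => Finset.sum_eq_zero fun t _ => ?_
    have hne : ¬(u = t ∧ v = j) := by rintro ⟨-, h2⟩; exact h h2.symm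
    simp [hne]

lemma kron_std_mul_apply (G : Matrix (Fin m × Fin n) (Fin m × Fin n) ℂ) (u v : Fin n)
    (k l : Fin m) (i j : Fin n) :
    (((1 : Matrix (Fin m) (Fin m) ℂ) ⊗ₖ Matrix.single u v (1:ℂ)) * G) (k, i) (l, j)
      = if i = u then G (k, v) (l, j) else 0 := by
  rw [Matrix.mul_apply]
  rw [Fintype.sum_prod_type]
  simp only [Matrix.kroneckerMap_apply, Matrix.one_apply, Matrix.single, Matrix.of_apply]
  rcases eq_or_ne i u with rfl | h
  · simp [Finset.sum_ite_eq', eq_comm]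
  · rw [if_neg h]
    refine Finset.sum_eq_zero fun x _ => Finset.sum_eq_zero fun t _ => ?_
    have hne : ¬(u = i ∧ v = t) := by rintro ⟨h1, -⟩; exact h h1.symm
    simp [hne]

lemma sum_kron {ι : Type} [Fintype ι] (f : ι → Matrix (Fin m) (Fin m) ℂ)
    (B : Matrix (Fin n) (Fin n) ℂ) :
    (∑ c, f c) ⊗ₖ B = ∑ c, f c ⊗ₖ B := by
  ext ⟨a, b⟩ ⟨c, e⟩
  simp [Matrix.kroneckerMap_apply, Matrix.sum_apply, Finset.sum_mul]

lemma std_kron_mul_apply (G : Matrix (Fin m × Fin n) (Fin m × Fin n) ℂ) (u v : Fin m)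
    (k l : Fin m) (i j : Fin n) :
    ((Matrix.single u v (1:ℂ) ⊗ₖ (1 : Matrix (Fin n) (Fin n) ℂ)) * G) (k, i) (l, j)
      = if k = u then G (v, i) (l, j) else 0 := by
  rw [Matrix.mul_apply, Fintype.sum_prod_type]
  simp only [Matrix.kroneckerMap_apply, Matrix.one_apply, Matrix.single, Matrix.of_apply]
  rcases eq_or_ne k u with rfl | h
  · simp [Finset.sum_ite_eq', eq_comm]
  · rw [if_neg h]
    refine Finset.sum_eq_zero fun x _ => Finset.sum_eq_zero fun t _ => ?_
    have hne : ¬(u = k ∧ v = x) := by rintro ⟨h1, -⟩; exact h h1.symm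
    simp [hne]

lemma mul_std_kron_apply (G : Matrix (Fin m × Fin n) (Fin m × Fin n) ℂ) (u v : Fin m)
    (k l : Fin m) (i j : Fin n) :
    (G * (Matrix.single u v (1:ℂ) ⊗ₖ (1 : Matrix (Fin n) (Fin n) ℂ))) (k, i) (l, j)
      = if l = v then G (k, i) (u, j) else 0 := by
  rw [Matrix.mul_apply, Fintype.sum_prod_type]
  simp only [Matrix.kroneckerMap_apply, Matrix.one_apply, Matrix.single, Matrix.of_apply]
  rcases eq_or_ne l v with rfl | h
  · simp [Finset.sum_ite_eq', eq_comm, mul_comm]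
  · rw [if_neg h]
    refine Finset.sum_eq_zero fun x _ => Finset.sum_eq_zero fun t _ => ?_
    have hne : ¬(u = x ∧ v = l) := by rintro ⟨-, h2⟩; exact h h2.symm
    simp [hne]

lemma sum_std_sandwich (G : Matrix (Fin m × Fin n) (Fin m × Fin n) ℂ) :
    ∑ a : Fin m, ∑ b : Fin m,
      (Matrix.single a b (1:ℂ) ⊗ₖ (1 : Matrix (Fin n) (Fin n) ℂ)) * G *
        (Matrix.single b a (1:ℂ) ⊗ₖ (1 : Matrix (Fin n) (Fin n) ℂ))
      = (1 : Matrix (Fin m) (Fin m) ℂ) ⊗ₖ Matrix.of (fun i j => ∑ b, G (b, i) (b, j)) := by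
  ext ⟨k, i⟩ ⟨l, j⟩
  simp only [Matrix.sum_apply, Matrix.mul_assoc]
  have hterm : ∀ a b : Fin m,
      ((Matrix.single a b (1:ℂ) ⊗ₖ (1 : Matrix (Fin n) (Fin n) ℂ)) *
        (G * (Matrix.single b a (1:ℂ) ⊗ₖ (1 : Matrix (Fin n) (Fin n) ℂ)))) (k, i) (l, j)
      = if k = a then (if l = a then G (b, i) (b, j) else 0) else 0 := by
    intro a b
    rw [std_kron_mul_apply]
    rcases eq_or_ne k a with rfl | h
    · rw [if_pos rfl, if_pos rfl, mul_std_kron_apply]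
    · rw [if_neg h, if_neg h]
  simp only [hterm]
  rw [Finset.sum_comm]
  simp only [Finset.sum_ite_eq, Finset.mem_univ, if_true]
  rcases eq_or_ne k l with rfl | h
  · simp [Matrix.kroneckerMap_apply, Matrix.one_apply]
  · simp [Matrix.kroneckerMap_apply, Matrix.one_apply, h, Ne.symm h]

end Kron

section Embed
variable {m n p : ℕ}
open Sum

lemma PA_mul_mul (ρ : Matrix (HIdx m n p) (HIdx m n p) ℂ) :
    PA m n p * ρ * PA m n p = embed ρ.toBlocks₁₁ := by
  rw [PA, embed_mul_mul, Matrix.one_mul, Matrix.mul_one]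

lemma PA_mul_embed (M : Matrix (Fin m × Fin n) (Fin m × Fin n) ℂ) :
    PA m n p * embed M = embed M := by
  rw [PA, embed_mul_embed, Matrix.one_mul]

lemma embed_mul_PA (M : Matrix (Fin m × Fin n) (Fin m × Fin n) ℂ) :
    embed M * PA m n p = embed M := by
  rw [PA, embed_mul_embed, Matrix.mul_one]

lemma PA_conjT : (PA m n p)ᴴ = PA m n p := by
  rw [PA, embed_conjT, Matrix.conjTranspose_one]

lemma PA_mul_PA : PA m n p * PA m n p = PA m n p := PA_mul_embed 1

lemma Pmu_conjT (k l : Fin m) : (Pmu (m := m) n p k l)ᴴ = Pmu n p l k := by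
  rw [Pmu, Pmu, embed_conjT, kron_conjT, stdBasis_conjT, Matrix.conjTranspose_one]

lemma sum_Pmu_sandwich (ρ : Matrix (HIdx m n p) (HIdx m n p) ℂ) :
    ∑ a : Fin m, ∑ b : Fin m, Pmu n p a b * ρ * (Pmu n p a b)ᴴ
      = embed ((1 : Matrix (Fin m) (Fin m) ℂ) ⊗ₖ trA ρ) := by
  have hterm : ∀ a b : Fin m, Pmu (m := m) n p a b * ρ * (Pmu n p a b)ᴴ
      = embed ((Matrix.single a b (1:ℂ) ⊗ₖ (1 : Matrix (Fin n) (Fin n) ℂ)) *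
          ρ.toBlocks₁₁ * (Matrix.single b a (1:ℂ) ⊗ₖ (1 : Matrix (Fin n) (Fin n) ℂ))) := by
    intro a b
    rw [Pmu_conjT, Pmu, Pmu, embed_mul_mul]
  simp only [hterm]
  simp_rw [← embed_sum]
  rw [sum_std_sandwich]
  rfl

lemma PA_eq_sum_inl : PA m n p
    = ∑ t : Fin m × Fin n, Matrix.single (inl t : HIdx m n p) (inl t) (1:ℂ) := by
  ext x y
  rcases eq_or_ne x y with rfl | hxy
  · cases x with
    | inl a =>
        simp [PA, embed, Matrix.sum_apply, Matrix.single, Matrix.one_apply]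
    | inr j =>
        simp [PA, embed, Matrix.sum_apply, Matrix.single]
  · have hz : ∀ t : Fin m × Fin n,
        Matrix.single (inl t : HIdx m n p) (inl t) (1:ℂ) x y = 0 :=
      fun t => Matrix.single_apply_of_ne _ _ _ _ _
        (by rintro ⟨rfl, rfl⟩; exact hxy rfl)
    rw [Matrix.sum_apply]
    simp only [hz, Finset.sum_const_zero]
    cases x with
    | inl a =>
        cases y with
        | inl b =>
            have hab : a ≠ b := fun h => hxy (by rw [h])
            simp [PA, embed, Matrix.one_apply, hab]
        | inr j => simp [PA, embed]
    | inr j => cases y <;> simp [PA, embed]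

lemma PA_add_sum_inr : PA m n p
    + ∑ j : Fin p, Matrix.single (inr j : HIdx m n p) (inr j) (1:ℂ) = 1 := by
  have h := sum_std_diag (d := HIdx m n p)
  rw [Fintype.sum_sum_type] at h
  rw [PA_eq_sum_inl]
  exact h

lemma trace_split (ρ : Matrix (HIdx m n p) (HIdx m n p) ℂ) :
    ρ.trace = (∑ t : Fin m × Fin n, ρ (inl t) (inl t)) + ∑ j : Fin p, ρ (inr j) (inr j) := by
  rw [Matrix.trace]
  rw [show ∑ x : HIdx m n p, ρ.diag x = ∑ x : HIdx m n p, ρ x x from rfl, Fintype.sum_sum_type]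

end Embed

section Fwd
variable {m n p : ℕ}
open Sum

lemma fwd [NeZero m] [NeZero n]
    (E R : Matrix (HIdx m n p) (HIdx m n p) ℂ →ₗ[ℂ] Matrix (HIdx m n p) (HIdx m n p) ℂ)
    (hE : IsQuantumOperation E) (hR : IsQuantumOperation R)
    (hcorr : ∀ σ : Matrix (HIdx m n p) (HIdx m n p) ℂ,
        (∃ (σA : Matrix (Fin m) (Fin m) ℂ) (σB : Matrix (Fin n) (Fin n) ℂ),
            σ = embed (σA ⊗ₖ σB)) →
        trA (PA m n p * R (E σ) * PA m n p) = trA σ) :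
    ∃ R' : Matrix (HIdx m n p) (HIdx m n p) ℂ →ₗ[ℂ] Matrix (HIdx m n p) (HIdx m n p) ℂ,
      IsQuantumOperation R' ∧
      ∀ σB : Matrix (Fin n) (Fin n) ℂ,
        R' (E (embed ((1 : Matrix (Fin m) (Fin m) ℂ) ⊗ₖ σB)))
          = embed ((1 : Matrix (Fin m) (Fin m) ℂ) ⊗ₖ σB) := by
  have hm0 : (m : ℂ) ≠ 0 := Nat.cast_ne_zero.mpr (NeZero.ne m)
  set w : ℂ := (((Real.sqrt m)⁻¹ : ℝ) : ℂ) with hw_def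
  have hws : star w = w := Complex.conj_ofReal _
  have hww : w * w = (m : ℂ)⁻¹ := by
    rw [hw_def, ← Complex.ofReal_mul, ← mul_inv, Real.mul_self_sqrt (Nat.cast_nonneg m)]
    push_cast
    rfl
  set W : (Fin m × Fin m) ⊕ Fin p → Matrix (HIdx m n p) (HIdx m n p) ℂ :=
    Sum.elim (fun ab => w • Pmu n p ab.1 ab.2)
      (fun j => Matrix.single (inl ((0 : Fin m), (0 : Fin n))) (inr j) 1) with hW_def
  have hWTP : ∑ x, (W x)ᴴ * W x = 1 := by
    rw [Fintype.sum_sum_type, Fintype.sum_prod_type]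
    have h1 : ∀ a b : Fin m, (W (inl (a, b)))ᴴ * W (inl (a, b))
        = (m:ℂ)⁻¹ • embed (Matrix.single b b (1:ℂ)
            ⊗ₖ (1 : Matrix (Fin n) (Fin n) ℂ)) := by
      intro a b
      show (w • Pmu n p a b)ᴴ * (w • Pmu n p a b) = _
      rw [Matrix.conjTranspose_smul, hws, smul_mul_smul_comm, hww, Pmu_conjT, Pmu, Pmu,
        embed_mul_embed, ← Matrix.mul_kronecker_mul, Matrix.single_mul_single_same,
        Matrix.one_mul, one_mul]
    have h2 : ∀ j : Fin p, (W (inr j))ᴴ * W (inr j)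
        = Matrix.single (inr j : HIdx m n p) (inr j) (1:ℂ) := by
      intro j
      show (Matrix.single (inl ((0 : Fin m), (0 : Fin n))) (inr j) 1)ᴴ
        * Matrix.single (inl ((0 : Fin m), (0 : Fin n))) (inr j) 1 = _
      rw [stdBasis_conjT, Matrix.single_mul_single_same, one_mul]
    simp only [h1, h2]
    rw [Finset.sum_const, Finset.card_univ, Fintype.card_fin, ← Finset.smul_sum,
      ← Nat.cast_smul_eq_nsmul ℂ, smul_smul, mul_inv_cancel₀ hm0, one_smul]
    rw [← embed_sum, ← sum_kron, sum_std_diag, Matrix.one_kronecker_one]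
    exact PA_add_sum_inr
  have hact : ∀ ρ : Matrix (HIdx m n p) (HIdx m n p) ℂ,
      krausMap W ρ = (m:ℂ)⁻¹ • embed ((1 : Matrix (Fin m) (Fin m) ℂ) ⊗ₖ trA ρ)
        + (∑ j : Fin p, ρ (inr j) (inr j)) •
            Matrix.single (inl ((0:Fin m),(0:Fin n)) : HIdx m n p) (inl (0,0)) 1 := by
    intro ρ
    rw [krausMap_apply, Fintype.sum_sum_type]
    congr 1
    · have h1 : ∀ ab : Fin m × Fin m, W (inl ab) * ρ * (W (inl ab))ᴴ
          = (m:ℂ)⁻¹ • (Pmu n p ab.1 ab.2 * ρ * (Pmu n p ab.1 ab.2)ᴴ) := by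
        intro ab
        show (w • Pmu n p ab.1 ab.2) * ρ * (w • Pmu n p ab.1 ab.2)ᴴ = _
        rw [Matrix.conjTranspose_smul, hws, smul_mul_assoc, smul_mul_smul_comm, hww]
      simp only [h1]
      rw [← Finset.smul_sum, Fintype.sum_prod_type, sum_Pmu_sandwich]
    · have h2 : ∀ j : Fin p, W (inr j) * ρ * (W (inr j))ᴴ
          = ρ (inr j) (inr j) •
              Matrix.single (inl ((0:Fin m),(0:Fin n)) : HIdx m n p) (inl (0,0)) 1 :=
        fun j => std_sandwich _ _ ρ
      simp only [h2]
      rw [Finset.sum_smul]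
  refine ⟨(krausMap W) ∘ₗ R, (krausMap_isQO W hWTP).comp hR, fun σB => ?_⟩
  have hσ := hcorr (embed ((1:Matrix (Fin m) (Fin m) ℂ) ⊗ₖ σB)) ⟨1, σB, rfl⟩
  rw [trA_sandwich, trA_embed, Matrix.trace_one, Fintype.card_fin] at hσ
  set ρ := R (E (embed ((1:Matrix (Fin m) (Fin m) ℂ) ⊗ₖ σB))) with hρ
  show krausMap W ρ = _
  rw [hact, hσ]
  have hsum0 : ∑ j : Fin p, ρ (inr j) (inr j) = 0 := by
    have h1 : ρ.trace = (m:ℂ) * σB.trace := by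
      rw [hρ, hR.trace_eq, hE.trace_eq, trace_embed, Matrix.trace_kronecker, Matrix.trace_one,
        Fintype.card_fin]
    have h3 : ∑ t : Fin m × Fin n, ρ (inl t) (inl t) = (m:ℂ) * σB.trace := by
      rw [← trace_trA, hσ, Matrix.trace_smul, smul_eq_mul]
    have h2 := trace_split ρ
    rw [h1, h3] at h2
    exact (left_eq_add.mp h2)
  rw [hsum0, zero_smul, add_zero, Matrix.kronecker_smul, embed_smul, smul_smul,
    inv_mul_cancel₀ hm0, one_smul]

end Fwd

section Bwd
variable {m n p : ℕ}
open Sum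

lemma bwd [NeZero n]
    (E R' : Matrix (HIdx m n p) (HIdx m n p) ℂ →ₗ[ℂ] Matrix (HIdx m n p) (HIdx m n p) ℂ)
    (hE : IsQuantumOperation E) (hR' : IsQuantumOperation R')
    (hfix : ∀ σB : Matrix (Fin n) (Fin n) ℂ,
      R' (E (embed ((1 : Matrix (Fin m) (Fin m) ℂ) ⊗ₖ σB)))
        = embed ((1 : Matrix (Fin m) (Fin m) ℂ) ⊗ₖ σB)) :
    ∀ σ : Matrix (HIdx m n p) (HIdx m n p) ℂ,
      (∃ (σA : Matrix (Fin m) (Fin m) ℂ) (σB : Matrix (Fin n) (Fin n) ℂ),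
          σ = embed (σA ⊗ₖ σB)) →
      trA (PA m n p * R' (E σ) * PA m n p) = trA σ := by
  obtain ⟨ι, hι, N, hT, hN⟩ := hR'.comp hE
  letI := hι
  have hT' : ∀ ρ, R' (E ρ) = ∑ c, N c * ρ * (N c)ᴴ := fun ρ => hT ρ
  have hfix' : ∀ τ : Matrix (Fin n) (Fin n) ℂ,
      ∑ c, N c * embed ((1 : Matrix (Fin m) (Fin m) ℂ) ⊗ₖ τ) * (N c)ᴴ
        = embed ((1 : Matrix (Fin m) (Fin m) ℂ) ⊗ₖ τ) := fun τ => by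
    rw [← hT']; exact hfix τ
  set P : Matrix (HIdx m n p) (HIdx m n p) ℂ := PA m n p with hP_def
  have hPP : P * P = P := PA_mul_PA
  have hPH : Pᴴ = P := PA_conjT
  have hPembed : ∀ M : Matrix (Fin m × Fin n) (Fin m × Fin n) ℂ,
      P * embed M = embed M := fun M => PA_mul_embed M
  have hembedP : ∀ M : Matrix (Fin m × Fin n) (Fin m × Fin n) ℂ,
      embed M * P = embed M := fun M => embed_mul_PA M
  have hPmm : ∀ ρ : Matrix (HIdx m n p) (HIdx m n p) ℂ,
      P * ρ * P = embed ρ.toBlocks₁₁ := fun ρ => PA_mul_mul ρ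
  have hPfix : ∑ c, N c * P * (N c)ᴴ = P := by
    have h := hfix' 1
    rwa [Matrix.one_kronecker_one] at h
  -- Step A
  have stepA : ∀ c, N c * P = P * (N c * P) := by
    have hz : ∀ c, (1 - P) * (N c * P) = 0 := by
      apply eq_zero_of_sum_mul_conjT (fun c => (1 - P) * (N c * P))
      have h1P : ((1 - P) : Matrix (HIdx m n p) (HIdx m n p) ℂ)ᴴ = 1 - P := by
        rw [Matrix.conjTranspose_sub, Matrix.conjTranspose_one, hPH]
      have hterm : ∀ c, ((1 - P) * (N c * P)) * ((1 - P) * (N c * P))ᴴ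
          = (1 - P) * (N c * P * (N c)ᴴ) * (1 - P) := by
        intro c
        rw [Matrix.conjTranspose_mul, Matrix.conjTranspose_mul, h1P, hPH]
        simp only [mul_assoc]
        rw [← mul_assoc P P, hPP]
      calc ∑ c, ((1 - P) * (N c * P)) * ((1 - P) * (N c * P))ᴴ
          = ∑ c, (1 - P) * (N c * P * (N c)ᴴ) * (1 - P) :=
            Finset.sum_congr rfl fun c _ => hterm c
        _ = (1 - P) * (∑ c, N c * P * (N c)ᴴ) * (1 - P) := by
            rw [Finset.mul_sum, Finset.sum_mul]
        _ = 0 := by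
            rw [hPfix]
            have h0 : ((1 : Matrix (HIdx m n p) (HIdx m n p) ℂ) - P) * P = 0 := by
              rw [Matrix.sub_mul, Matrix.one_mul, hPP, sub_self]
            rw [h0, Matrix.zero_mul]
    intro c
    have h := hz c
    rw [Matrix.sub_mul, Matrix.one_mul, sub_eq_zero] at h
    exact h
  -- Step B: commutation with the algebra
  have comm : ∀ (τ : Matrix (Fin n) (Fin n) ℂ) (c : ι),
      (N c * P) * embed ((1 : Matrix (Fin m) (Fin m) ℂ) ⊗ₖ τ)
        = embed ((1 : Matrix (Fin m) (Fin m) ℂ) ⊗ₖ τ) * (N c * P) := by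
    intro τ c0
    set X : Matrix (HIdx m n p) (HIdx m n p) ℂ
      := embed ((1 : Matrix (Fin m) (Fin m) ℂ) ⊗ₖ τ) with hX_def
    have hXP : X * P = X := hembedP _
    have hPX : P * X = X := hPembed _
    have hXH : Xᴴ = embed ((1 : Matrix (Fin m) (Fin m) ℂ) ⊗ₖ τᴴ) := by
      rw [hX_def, embed_conjT, kron_conjT, Matrix.conjTranspose_one]
    have hXHP : Xᴴ * P = Xᴴ := by rw [hXH]; exact hembedP _
    have hPXH : P * Xᴴ = Xᴴ := by rw [hXH]; exact hPembed _
    have hXXH : X * Xᴴ = embed ((1 : Matrix (Fin m) (Fin m) ℂ) ⊗ₖ (τ * τᴴ)) := by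
      rw [hX_def, hXH, embed_mul_embed, ← Matrix.mul_kronecker_mul, Matrix.one_mul]
    have hfixX : ∑ c, N c * X * (N c)ᴴ = X := hfix' τ
    have hfixXH : ∑ c, N c * Xᴴ * (N c)ᴴ = Xᴴ := by rw [hXH]; exact hfix' τᴴ
    have hfixXXH : ∑ c, N c * (X * Xᴴ) * (N c)ᴴ = X * Xᴴ := by rw [hXXH]; exact hfix' _
    -- auxiliary associativity facts
    have hPXw : ∀ z, P * (X * z) = X * z := fun z => by rw [← mul_assoc, hPX]
    have hXPw : ∀ z, X * (P * z) = X * z := fun z => by rw [← mul_assoc, hXP]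
    have hPXHw : ∀ z, P * (Xᴴ * z) = Xᴴ * z := fun z => by rw [← mul_assoc, hPXH]
    have hXHPw : ∀ z, Xᴴ * (P * z) = Xᴴ * z := fun z => by rw [← mul_assoc, hXHP]
    have hPPw : ∀ z, P * (P * z) = P * z := fun z => by rw [← mul_assoc, hPP]
    have key : ∑ c, ((N c * P) * X - X * (N c * P)) * ((N c * P) * X - X * (N c * P))ᴴ
        = 0 := by
      have expand : ∀ c, ((N c * P) * X - X * (N c * P)) * ((N c * P) * X - X * (N c * P))ᴴ
          = N c * (X * Xᴴ) * (N c)ᴴ - (N c * X * (N c)ᴴ) * Xᴴ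
            - X * (N c * Xᴴ * (N c)ᴴ) + X * (N c * P * (N c)ᴴ) * Xᴴ := by
        intro c
        simp only [Matrix.conjTranspose_sub, Matrix.conjTranspose_mul, hPH]
        simp only [Matrix.sub_mul, Matrix.mul_sub]
        simp only [mul_assoc, hPX, hXP, hPP, hPXw, hXPw, hPXHw, hXHPw, hPPw, hPXH, hXHP]
        abel
      calc ∑ c, ((N c * P) * X - X * (N c * P)) * ((N c * P) * X - X * (N c * P))ᴴ
          = ∑ c, (N c * (X * Xᴴ) * (N c)ᴴ - (N c * X * (N c)ᴴ) * Xᴴ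
              - X * (N c * Xᴴ * (N c)ᴴ) + X * (N c * P * (N c)ᴴ) * Xᴴ) :=
            Finset.sum_congr rfl fun c _ => expand c
        _ = (∑ c, N c * (X * Xᴴ) * (N c)ᴴ) - (∑ c, N c * X * (N c)ᴴ) * Xᴴ
            - X * (∑ c, N c * Xᴴ * (N c)ᴴ) + X * (∑ c, N c * P * (N c)ᴴ) * Xᴴ := by
            rw [Finset.sum_add_distrib, Finset.sum_sub_distrib, Finset.sum_sub_distrib,
              Finset.sum_mul, Finset.mul_sum]
            rw [Finset.mul_sum, Finset.sum_mul]
        _ = 0 := by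
            rw [hfixX, hfixXH, hfixXXH, hPfix, hXP]
            abel
    have hY := eq_zero_of_sum_mul_conjT _ key c0
    rw [sub_eq_zero] at hY
    exact hY
  -- A c is supported on the block
  have hAc : ∀ c, N c * P = embed ((N c * P).toBlocks₁₁) := by
    intro c
    have h2 : N c * P = P * (N c * P) * P := by
      calc N c * P = N c * P * P := by rw [mul_assoc, hPP]
        _ = P * (N c * P) * P := by conv_lhs => rw [stepA c]
    conv_lhs => rw [h2, hPmm]
  -- block structure
  set Cm : ι → Matrix (Fin m) (Fin m) ℂ
    := fun c => Matrix.of fun k l => (N c * P).toBlocks₁₁ (k, (0 : Fin n)) (l, 0) with hCm_def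
  have hstruct : ∀ c, (N c * P).toBlocks₁₁
      = Cm c ⊗ₖ (1 : Matrix (Fin n) (Fin n) ℂ) := by
    intro c
    have commB : ∀ τ : Matrix (Fin n) (Fin n) ℂ,
        (N c * P).toBlocks₁₁ * ((1 : Matrix (Fin m) (Fin m) ℂ) ⊗ₖ τ)
          = ((1 : Matrix (Fin m) (Fin m) ℂ) ⊗ₖ τ) * (N c * P).toBlocks₁₁ := by
      intro τ
      apply embed_inj (p := p)
      rw [← embed_mul_embed, ← embed_mul_embed, ← hAc c]
      exact comm τ c
    have hrel : ∀ (u v : Fin n) (k l : Fin m) (i j : Fin n),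
        (if j = v then (N c * P).toBlocks₁₁ (k, i) (l, u) else 0)
          = (if i = u then (N c * P).toBlocks₁₁ (k, v) (l, j) else 0) := by
      intro u v k l i j
      have h := commB (Matrix.single u v 1)
      have h2 := congrFun (congrFun h (k, i)) (l, j)
      rwa [mul_kron_std_apply, kron_std_mul_apply] at h2
    ext ⟨k, i⟩ ⟨l, j⟩
    rw [Matrix.kroneckerMap_apply, Matrix.one_apply, hCm_def]
    rcases eq_or_ne i j with rfl | hij
    · rw [if_pos rfl, mul_one]
      have h := hrel i 0 k l i 0
      simpa using h
    · rw [if_neg hij, mul_zero]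
      have h := hrel i i k l i j
      rw [if_neg (Ne.symm hij), if_pos rfl] at h
      exact h.symm
  -- Step D : trace preservation on the A factor
  have hsumA : ∑ c, (N c * P)ᴴ * (N c * P) = P := by
    have hterm : ∀ c, (N c * P)ᴴ * (N c * P) = P * ((N c)ᴴ * N c) * P := by
      intro c
      rw [Matrix.conjTranspose_mul, hPH]
      simp only [mul_assoc]
    simp only [hterm]
    rw [← Finset.sum_mul, ← Finset.mul_sum, hN, Matrix.mul_one, hPP]
  have hCsum : ∑ c, (Cm c)ᴴ * Cm c = 1 := by
    apply kron_one_inj (n := n)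
    apply embed_inj (p := p)
    have hterm : ∀ c, embed (p := p) (((Cm c)ᴴ * Cm c) ⊗ₖ (1 : Matrix (Fin n) (Fin n) ℂ))
        = (N c * P)ᴴ * (N c * P) := by
      intro c
      rw [hAc c, hstruct c, embed_conjT, kron_conjT, Matrix.conjTranspose_one,
        embed_mul_embed, ← Matrix.mul_kronecker_mul, Matrix.one_mul]
    rw [sum_kron, embed_sum]
    simp only [hterm]
    rw [hsumA, Matrix.one_kronecker_one]
    rfl
  -- Step E : conclusion
  rintro σ ⟨σA, σB, rfl⟩
  rw [hP_def] at *
  rw [trA_sandwich, hT', trA_sum]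
  have hPembed' : ∀ M : Matrix (Fin m × Fin n) (Fin m × Fin n) ℂ,
      PA m n p * embed M = embed M := fun M => PA_mul_embed M
  have hembedP' : ∀ M : Matrix (Fin m × Fin n) (Fin m × Fin n) ℂ,
      embed M * PA m n p = embed M := fun M => embed_mul_PA M
  have hterm : ∀ c, N c * embed (σA ⊗ₖ σB) * (N c)ᴴ
      = embed ((Cm c * σA * (Cm c)ᴴ) ⊗ₖ σB) := by
    intro c
    have hPz : ∀ z, PA m n p * (embed (σA ⊗ₖ σB) * z) = embed (σA ⊗ₖ σB) * z :=
      fun z => by rw [← mul_assoc, hPembed']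
    have hembz : ∀ z, embed (σA ⊗ₖ σB) * (PA m n p * z) = embed (σA ⊗ₖ σB) * z :=
      fun z => by rw [← mul_assoc, hembedP']
    have key : N c * embed (σA ⊗ₖ σB) * (N c)ᴴ
        = (N c * PA m n p) * embed (σA ⊗ₖ σB) * (N c * PA m n p)ᴴ := by
      rw [Matrix.conjTranspose_mul, PA_conjT]
      simp only [mul_assoc, hPz, hembz, hPembed', hembedP']
    rw [key, hAc c, hstruct c, embed_conjT, kron_conjT, Matrix.conjTranspose_one,
      embed_mul_embed, embed_mul_embed, ← Matrix.mul_kronecker_mul, ← Matrix.mul_kronecker_mul,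
      Matrix.one_mul, Matrix.mul_one]
  simp only [hterm, trA_embed]
  rw [← Finset.sum_smul]
  congr 1
  calc ∑ c, (Cm c * σA * (Cm c)ᴴ).trace
      = ∑ c, ((Cm c)ᴴ * Cm c * σA).trace :=
        Finset.sum_congr rfl fun c _ => by rw [Matrix.trace_mul_cycle]
    _ = ((∑ c, (Cm c)ᴴ * Cm c) * σA).trace := by rw [Finset.sum_mul, Matrix.trace_sum]
    _ = σA.trace := by rw [hCsum, Matrix.one_mul]

end Bwd

section Degenerate
variable {m n p : ℕ}
open Sum

lemma embed_eq_zero_of_degenerate (hmn : m = 0 ∨ n = 0)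
    (M : Matrix (Fin m × Fin n) (Fin m × Fin n) ℂ) : embed (p := p) M = 0 := by
  have hemp : IsEmpty (Fin m × Fin n) := by
    rcases hmn with h | h <;> subst h <;> infer_instance
  ext x y
  cases x with
  | inl a => exact (hemp.false a).elim
  | inr j => cases y <;> simp [embed]

lemma id_isQO {d : Type} [Fintype d] [DecidableEq d] :
    IsQuantumOperation (LinearMap.id : Matrix d d ℂ →ₗ[ℂ] Matrix d d ℂ) :=
  ⟨PUnit, inferInstance, fun _ => 1, fun ρ => by simp, by simp⟩

end Degenerate

end Corr

/-- The `H^B` sector of the semigroup `𝔄` is correctable for `E` iff the C*-algebra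
`1^A ⊗ B(H^B)` can be corrected precisely by some quantum operation. -/
theorem correctable_iff_algebra_correctable {m n p : ℕ}
    (E : Matrix (HIdx m n p) (HIdx m n p) ℂ →ₗ[ℂ] Matrix (HIdx m n p) (HIdx m n p) ℂ)
    (hE : IsQuantumOperation E) :
    (∃ R : Matrix (HIdx m n p) (HIdx m n p) ℂ →ₗ[ℂ] Matrix (HIdx m n p) (HIdx m n p) ℂ,
      IsQuantumOperation R ∧
      ∀ σ : Matrix (HIdx m n p) (HIdx m n p) ℂ,
        (∃ (σA : Matrix (Fin m) (Fin m) ℂ) (σB : Matrix (Fin n) (Fin n) ℂ),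
            σ = embed (σA ⊗ₖ σB)) →
        trA (PA m n p * R (E σ) * PA m n p) = trA σ) ↔
    (∃ R' : Matrix (HIdx m n p) (HIdx m n p) ℂ →ₗ[ℂ] Matrix (HIdx m n p) (HIdx m n p) ℂ,
      IsQuantumOperation R' ∧
      ∀ σB : Matrix (Fin n) (Fin n) ℂ,
        R' (E (embed ((1 : Matrix (Fin m) (Fin m) ℂ) ⊗ₖ σB)))
          = embed ((1 : Matrix (Fin m) (Fin m) ℂ) ⊗ₖ σB)) := by
  by_cases hmn : m = 0 ∨ n = 0
  · constructor
    · intro _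
      refine ⟨LinearMap.id, Corr.id_isQO, fun σB => ?_⟩
      rw [Corr.embed_eq_zero_of_degenerate hmn]
      simp
    · intro _
      refine ⟨LinearMap.id, Corr.id_isQO, fun σ hσ => ?_⟩
      obtain ⟨σA, σB, rfl⟩ := hσ
      rw [Corr.embed_eq_zero_of_degenerate hmn]
      simp
  · push_neg at hmn
    obtain ⟨hm, hn⟩ := hmn
    haveI : NeZero m := ⟨hm⟩
    haveI : NeZero n := ⟨hn⟩
    constructor
    · rintro ⟨R, hR, hcorr⟩
      exact Corr.fwd E R hE hR hcorr
    · rintro ⟨R', hR', hfix⟩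
      exact ⟨R', hR', Corr.bwd E R' hE hR' hfix⟩
end
end

section
/- Let H = (H^A ⊗ H^B) ⊕ K be a fixed decomposition of a finite-dimensional Hilbert space, let E = {E_a} and R = {R_b} be quantum operations on B(H) with the indicated Kraus operators, and suppose there are scalars μ_{abkl} such that P_k R_b E_a P_l = μ_{abkl} P_kl for all a, b, k, l, and that the subspace H^A ⊗ H^B is invariant for every operator R_b E_a. Then for all a, a', l, l' one has P_l E_a† E_{a'} P_{l'} = (Σ_{b,k} conj(μ_{abkl}) μ_{a'bkl'}) P_{ll'}. -/
open scoped Kronecker Matrix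

noncomputable section

lemma embed_mul {m n p : ℕ} (M N : Matrix (Fin m × Fin n) (Fin m × Fin n) ℂ) :
    (embed M * embed N : Matrix (HIdx m n p) (HIdx m n p) ℂ) = embed (M * N) := by
  simp [embed, Matrix.fromBlocks_multiply]

lemma embed_conjTranspose {m n p : ℕ} (M : Matrix (Fin m × Fin n) (Fin m × Fin n) ℂ) :
    (embed M : Matrix (HIdx m n p) (HIdx m n p) ℂ)ᴴ = embed Mᴴ := by
  simp [embed, Matrix.fromBlocks_conjTranspose]

lemma Pmu_conjTranspose {m n p : ℕ} (k l : Fin m) :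
    (Pmu n p k l)ᴴ = Pmu n p l k := by
  ext i j
  obtain i | i := i <;> obtain j | j := j <;>
    simp [Pmu, embed, Matrix.conjTranspose_apply, Matrix.single, Matrix.one_apply,
      and_comm, eq_comm]
  split_ifs <;> simp_all

lemma Pmu_mul_Pmu {m n p : ℕ} (k l k' l' : Fin m) :
    Pmu n p k l * Pmu n p k' l' =
      if l = k' then Pmu n p k l' else 0 := by
  rw [Pmu, Pmu, embed_mul, ← Matrix.mul_kronecker_mul]
  by_cases h : l = k'
  · subst h
    rw [Matrix.single_mul_single_same, one_mul, one_mul, if_pos rfl, Pmu]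
  · rw [show Matrix.single k l (1 : ℂ) * Matrix.single k' l' (1 : ℂ) = 0 from
      Matrix.single_mul_single_of_ne (h := h) .., if_neg h]
    simp [embed]

lemma PA_eq_sum {m n p : ℕ} : PA m n p = ∑ k : Fin m, Pmu n p k k := by
  ext i j
  cases i <;> cases j <;>
    simp [PA, Pmu, embed, Matrix.sum_apply, Matrix.one_apply, Matrix.single,
      Finset.sum_ite_eq, Prod.ext_iff, and_assoc, ite_and, Finset.sum_ite_eq']
  split_ifs <;> rfl

lemma PA_mul_Pmu {m n p : ℕ} (k l : Fin m) :
    PA m n p * Pmu n p k l = Pmu n p k l := by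
  rw [PA, Pmu, embed_mul, one_mul]

/-- If `P_k R_b E_a P_l = μ_{abkl} P_{kl}` and `H^A ⊗ H^B` is invariant for each `R_b E_a`,
then `P_l E_a† E_{a'} P_{l'} = (Σ_{b,k} conj(μ_{abkl}) μ_{a'bkl'}) P_{ll'}`. -/
theorem necessity_computation {m n p : ℕ} {ι κ : Type} [Fintype ι] [Fintype κ]
    (Eop Rop : Matrix (HIdx m n p) (HIdx m n p) ℂ →ₗ[ℂ] Matrix (HIdx m n p) (HIdx m n p) ℂ)
    (E : ι → Matrix (HIdx m n p) (HIdx m n p) ℂ)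
    (R : κ → Matrix (HIdx m n p) (HIdx m n p) ℂ)
    (hEKraus : ∀ ρ, Eop ρ = ∑ a, E a * ρ * (E a)ᴴ)
    (hETP : ∑ a, (E a)ᴴ * E a = 1)
    (hRKraus : ∀ ρ, Rop ρ = ∑ b, R b * ρ * (R b)ᴴ)
    (hRTP : ∑ b, (R b)ᴴ * R b = 1)
    (μ : ι → κ → Fin m → Fin m → ℂ)
    (hμ : ∀ a b k l, Pmu n p k k * (R b * E a) * Pmu n p l l = μ a b k l • Pmu n p k l)
    (hinv : ∀ a b, (R b * E a) * PA m n p = PA m n p * (R b * E a) * PA m n p) :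
    ∀ a a' l l',
      Pmu n p l l * (E a)ᴴ * E a' * Pmu n p l' l' =
        (∑ b, ∑ k, (starRingEnd ℂ) (μ a b k l) * μ a' b k l') • Pmu n p l l' := by
  intro a a' l l'
  have key : ∀ (aa : ι) (b : κ) (l0 : Fin m),
      R b * E aa * Pmu n p l0 l0 = ∑ k, μ aa b k l0 • Pmu n p k l0 := by
    intro aa b l0
    calc R b * E aa * Pmu n p l0 l0
        = R b * E aa * (PA m n p * Pmu n p l0 l0) := by rw [PA_mul_Pmu]
      _ = (R b * E aa) * PA m n p * Pmu n p l0 l0 := (mul_assoc _ _ _).symm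
      _ = PA m n p * (R b * E aa) * PA m n p * Pmu n p l0 l0 := by rw [hinv aa b]
      _ = PA m n p * (R b * E aa) * (PA m n p * Pmu n p l0 l0) := mul_assoc _ _ _
      _ = PA m n p * (R b * E aa) * Pmu n p l0 l0 := by rw [PA_mul_Pmu]
      _ = (∑ k, Pmu n p k k) * (R b * E aa) * Pmu n p l0 l0 := by rw [← PA_eq_sum]
      _ = ∑ k, Pmu n p k k * (R b * E aa) * Pmu n p l0 l0 := by
            rw [Finset.sum_mul, Finset.sum_mul]
      _ = ∑ k, μ aa b k l0 • Pmu n p k l0 :=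
            Finset.sum_congr rfl fun k _ => hμ aa b k l0
  have expand : Pmu n p l l * (E a)ᴴ * E a' * Pmu n p l' l'
      = ∑ b, (R b * E a * Pmu n p l l)ᴴ * (R b * E a' * Pmu n p l' l') := by
    calc Pmu n p l l * (E a)ᴴ * E a' * Pmu n p l' l'
        = Pmu n p l l * (E a)ᴴ * (∑ b, (R b)ᴴ * R b) * E a' * Pmu n p l' l' := by
          rw [hRTP, mul_one]
      _ = ∑ b, Pmu n p l l * (E a)ᴴ * ((R b)ᴴ * R b) * E a' * Pmu n p l' l' := by
          simp_rw [Finset.mul_sum, Finset.sum_mul]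
      _ = ∑ b, (R b * E a * Pmu n p l l)ᴴ * (R b * E a' * Pmu n p l' l') :=
          Finset.sum_congr rfl fun b _ => by
            simp only [Matrix.conjTranspose_mul, Pmu_conjTranspose, mul_assoc]
  rw [expand]
  simp_rw [key a _ l, key a' _ l', Matrix.conjTranspose_sum, Matrix.conjTranspose_smul,
    Pmu_conjTranspose, Finset.sum_mul, Finset.mul_sum, Matrix.smul_mul, Matrix.mul_smul,
    Pmu_mul_Pmu, smul_ite, smul_zero, Finset.sum_ite_eq, Finset.mem_univ, if_true,
    smul_smul, Finset.sum_smul, starRingEnd_apply]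
end
end

section
/- Let C be a subspace of a finite-dimensional Hilbert space H with projection P_C, and let {E_a} and {F_c} be two families of operators on H giving operator-sum representations of the same quantum operation E, i.e. Σ_a E_a ρ E_a† = Σ_c F_c ρ F_c† for all ρ ∈ B(H), with Σ_a E_a† E_a = 1 = Σ_c F_c† F_c. If there exists a scalar matrix (λ_{ab}) with P_C E_a† E_b P_C = λ_{ab} P_C for all a, b, then there also exists a scalar matrix (λ'_{cd}) with P_C F_c† F_d P_C = λ'_{cd} P_C for all c, d. -/
open scoped Kronecker Matrix

noncomputable section

open Matrix in

/-- The Knill–Laflamme condition is independent of the operator-sum representation: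
if it holds for one Kraus family of a quantum operation, it holds for any other. -/
theorem knill_laflamme_representation_independent {d ι κ : Type}
    [Fintype d] [DecidableEq d] [Fintype ι] [Fintype κ]
    (P : Matrix d d ℂ) (hPproj : P * P = P) (hPsa : Pᴴ = P)
    (E : ι → Matrix d d ℂ) (F : κ → Matrix d d ℂ)
    (hsame : ∀ ρ : Matrix d d ℂ, ∑ a, E a * ρ * (E a)ᴴ = ∑ c, F c * ρ * (F c)ᴴ)
    (hETP : ∑ a, (E a)ᴴ * E a = 1)
    (hFTP : ∑ c, (F c)ᴴ * F c = 1)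
    (hKL : ∃ lam : ι → ι → ℂ, ∀ a b, P * (E a)ᴴ * E b * P = lam a b • P) :
    ∃ lam' : κ → κ → ℂ, ∀ c e, P * (F c)ᴴ * F e * P = lam' c e • P := by
  classical
  obtain ⟨lam, hlam⟩ := hKL
  have hchoi : ∀ i k j l, ∑ a, E a i k * star (E a j l) = ∑ c, F c i k * star (F c j l) := by
    intro i k j l
    have h := congrFun (congrFun (hsame (Matrix.single k l 1)) i) j
    simpa [Matrix.sum_apply, Matrix.mul_apply, Matrix.single, conjTranspose_apply,
      Finset.mul_sum, Finset.sum_mul, ite_mul, mul_ite, Finset.sum_ite_eq, Finset.sum_ite_eq',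
      ite_and] using h
  let eL : Matrix d d ℂ →ₗ[ℂ] EuclideanSpace ℂ (d × d) :=
    { toFun := fun M => WithLp.toLp 2 (fun p : d × d => M p.1 p.2)
      map_add' := fun _ _ => rfl
      map_smul' := fun _ _ => rfl }
  have eL_inj : Function.Injective eL := by
    intro M N h
    ext i j
    exact congrFun (congrArg WithLp.ofLp h) (i, j)
  let V : Submodule ℂ (EuclideanSpace ℂ (d × d)) := Submodule.span ℂ (Set.range fun a => eL (E a))
  have hFV : ∀ c, eL (F c) ∈ V := by
    intro c
    rw [← Submodule.orthogonal_orthogonal V, Submodule.mem_orthogonal]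
    intro v hv
    have hvE : ∀ a, (∑ p : d × d, star (v p) * E a p.1 p.2) = 0 := by
      intro a
      have h1 := (Submodule.mem_orthogonal V v).mp hv (eL (E a)) (Submodule.subset_span ⟨a, rfl⟩)
      have h2 := congrArg star h1
      simp [PiLp.inner_apply, RCLike.inner_apply, mul_comm] at h2 ⊢
      exact h2
    have key : ∀ {γ : Type} [Fintype γ] (G : γ → Matrix d d ℂ),
        (∑ x : γ, (∑ p : d × d, star (v p) * G x p.1 p.2) *
          star (∑ p : d × d, star (v p) * G x p.1 p.2))
        = ∑ p : d × d, ∑ q : d × d, star (v p) * v q *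
            (∑ x : γ, G x p.1 p.2 * star (G x q.1 q.2)) := by
      intro γ _ G
      have h1 : ∀ x, (∑ p : d × d, star (v p) * G x p.1 p.2) *
          star (∑ p : d × d, star (v p) * G x p.1 p.2)
          = ∑ p : d × d, ∑ q : d × d, star (v p) * v q *
              (G x p.1 p.2 * star (G x q.1 q.2)) := by
        intro x
        rw [star_sum, Finset.sum_mul_sum]
        refine Finset.sum_congr rfl fun p _ => Finset.sum_congr rfl fun q _ => ?_
        rw [StarMul.star_mul, star_star]
        ring
      simp only [h1]
      rw [Finset.sum_comm]
      refine Finset.sum_congr rfl fun p _ => ?_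
      rw [Finset.sum_comm]
      refine Finset.sum_congr rfl fun q _ => ?_
      rw [Finset.mul_sum]
    have hzero : ∑ c', (∑ p : d × d, star (v p) * F c' p.1 p.2) *
        star (∑ p : d × d, star (v p) * F c' p.1 p.2) = 0 := by
      rw [key F]
      have h3 : ∀ p q : d × d, (∑ x : κ, F x p.1 p.2 * star (F x q.1 q.2))
          = ∑ x : ι, E x p.1 p.2 * star (E x q.1 q.2) :=
        fun p q => (hchoi p.1 p.2 q.1 q.2).symm
      simp only [h3]
      rw [← key E]
      refine Finset.sum_eq_zero fun a _ => ?_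
      rw [hvE a, zero_mul]
    have hts : ∀ c', (∑ p : d × d, star (v p) * F c' p.1 p.2) = 0 := by
      intro c'
      have h4 := hzero
      simp only [Complex.star_def, Complex.mul_conj] at h4
      have h5 : ∑ c', Complex.normSq (∑ p : d × d, star (v p) * F c' p.1 p.2) = 0 := by
        exact_mod_cast h4
      have h6 := (Finset.sum_eq_zero_iff_of_nonneg
        (fun c' _ => Complex.normSq_nonneg _)).mp h5 c' (Finset.mem_univ c')
      exact Complex.normSq_eq_zero.mp h6
    have hc := hts c
    simp [PiLp.inner_apply, RCLike.inner_apply, mul_comm] at hc ⊢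
    exact hc
  have hu : ∀ c, ∃ u : ι → ℂ, F c = ∑ a, u a • E a := by
    intro c
    obtain ⟨w, hw⟩ := (Submodule.mem_span_range_iff_exists_fun ℂ).mp (hFV c)
    refine ⟨w, eL_inj ?_⟩
    rw [map_sum]
    simpa only [_root_.map_smul] using hw.symm
  choose u hu using hu
  refine ⟨fun c e => ∑ a, ∑ b, star (u c a) * u e b * lam a b, fun c e => ?_⟩
  rw [hu c, hu e]
  simp only [conjTranspose_sum, conjTranspose_smul, Matrix.mul_sum, Matrix.sum_mul,
    Matrix.mul_smul, Matrix.smul_mul, smul_smul, Finset.sum_smul, Finset.smul_sum]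
  rw [Finset.sum_comm]
  refine Finset.sum_congr rfl fun a _ => Finset.sum_congr rfl fun b _ => ?_
  rw [hlam, smul_smul]
  congr 1
  ring
end
end

section
/- Let C be a subspace of a finite-dimensional Hilbert space H with projection P_C, and let E = {E_a} be a quantum operation on B(H) such that for each a there is a unitary U_a on H and a scalar c_a with E_a P_C = c_a U_a P_C, and such that the subspaces U_a C are mutually orthogonal. Let P_a denote the projection of H onto U_a C. Then the operators {U_a† P_a} (together, if necessary, with a Kraus operator supported on the complement of ⊕_a U_a C to ensure trace preservation) define a quantum operation R on B(H) satisfying (R ∘ E)(σ) = σ for all σ ∈ B(C); moreover P_C E_a† E_b P_C = δ_{ab} |c_a|² P_C for all a, b, so the matrix Λ = (λ_{ab}) with λ_{ab} = δ_{ab}|c_a|² is positive and diagonal. -/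
open scoped Kronecker Matrix ComplexOrder

noncomputable section

/-- Motivating case of Standard QEC: if each `E_a` restricted to `C` is a scalar multiple
`c_a U_a` of a unitary, with the subspaces `U_a C` mutually orthogonal, then the operators
`{U_a† P_a}` (with `P_a` the projection onto `U_a C`), padded by one further Kraus operator
supported on the complement of `⊕_a U_a C`, give a quantum operation `R` correcting `E` on
`B(C)`; moreover `P E_a† E_b P = δ_{ab} |c_a|² P`, so `Λ` is positive and diagonal. -/
theorem unitary_error_model_correction {d ι : Type} [Fintype d] [DecidableEq d]
    [Fintype ι] [DecidableEq ι]
    (P : Matrix d d ℂ) (hPproj : P * P = P) (hPsa : Pᴴ = P)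
    (Eop : Matrix d d ℂ →ₗ[ℂ] Matrix d d ℂ)
    (E : ι → Matrix d d ℂ)
    (hKraus : ∀ ρ, Eop ρ = ∑ a, E a * ρ * (E a)ᴴ)
    (hTP : ∑ a, (E a)ᴴ * E a = 1)
    (U : ι → Matrix d d ℂ) (c : ι → ℂ)
    (hU : ∀ a, (U a)ᴴ * U a = 1 ∧ U a * (U a)ᴴ = 1)
    (hrestrict : ∀ a, E a * P = c a • (U a * P))
    (horth : ∀ a b, a ≠ b → P * (U a)ᴴ * U b * P = 0)
    (Pa : ι → Matrix d d ℂ) (hPa : ∀ a, Pa a = U a * P * (U a)ᴴ) :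
    (∃ Q : Matrix d d ℂ,
      -- `Q` is supported on the complement of `⊕_a U_a C`
      Q * (∑ a, Pa a) = 0 ∧
      -- `{U_a† P_a} ∪ {Q}` is a trace-preserving Kraus family
      (∑ a, ((U a)ᴴ * Pa a)ᴴ * ((U a)ᴴ * Pa a)) + Qᴴ * Q = 1 ∧
      -- the resulting quantum operation `R` corrects `E` on `B(C)`
      (∀ σ : Matrix d d ℂ, σ = P * σ * P →
        (∑ a, ((U a)ᴴ * Pa a) * Eop σ * ((U a)ᴴ * Pa a)ᴴ) + Q * Eop σ * Qᴴ = σ)) ∧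
    (∀ a b, P * (E a)ᴴ * E b * P =
      (if a = b then (starRingEnd ℂ) (c a) * c a else 0) • P) ∧
    (Matrix.of fun a b : ι =>
      if a = b then (starRingEnd ℂ) (c a) * c a else 0).PosSemidef ∧
    (Matrix.of fun a b : ι =>
      if a = b then (starRingEnd ℂ) (c a) * c a else 0).IsDiag := by

  -- Basic orthogonality computation
  have hPU : ∀ a b, P * (U a)ᴴ * U b * P = if a = b then P else 0 := by
    intro a b
    by_cases h : a = b
    · subst h
      simp only [if_pos rfl]
      calc P * (U a)ᴴ * U a * P = P * ((U a)ᴴ * U a) * P := by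
            simp only [Matrix.mul_assoc]
        _ = P := by rw [(hU a).1, Matrix.mul_one, hPproj]
    · simp [h, horth a b h]
  have hPE : ∀ a, P * (E a)ᴴ = (starRingEnd ℂ) (c a) • (P * (U a)ᴴ) := by
    intro a
    have := congrArg Matrix.conjTranspose (hrestrict a)
    simpa [Matrix.conjTranspose_mul, Matrix.conjTranspose_smul, hPsa] using this
  -- the Λ matrix identity
  have hLam : ∀ a b, P * (E a)ᴴ * E b * P =
      (if a = b then (starRingEnd ℂ) (c a) * c a else 0) • P := by
    intro a b
    calc P * (E a)ᴴ * E b * P = (P * (E a)ᴴ) * (E b * P) := by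
          simp only [Matrix.mul_assoc]
      _ = ((starRingEnd ℂ) (c a) • (P * (U a)ᴴ)) * (c b • (U b * P)) := by
          rw [hPE, hrestrict]
      _ = ((starRingEnd ℂ) (c a) * c b) • (P * (U a)ᴴ * U b * P) := by
          simp only [Matrix.smul_mul, Matrix.mul_smul, smul_smul, Matrix.mul_assoc,
            mul_comm]
      _ = (if a = b then (starRingEnd ℂ) (c a) * c a else 0) • P := by
          rw [hPU]
          by_cases h : a = b
          · subst h; simp
          · simp [h]
  -- sum of |c a|² acts as identity on C
  have hsumc : (∑ a, (starRingEnd ℂ) (c a) * c a) • P = P := by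
    have h1 : P * (∑ a, (E a)ᴴ * E a) * P = P := by
      rw [hTP, Matrix.mul_one, hPproj]
    calc (∑ a, (starRingEnd ℂ) (c a) * c a) • P
        = ∑ a, ((starRingEnd ℂ) (c a) * c a) • P := Finset.sum_smul
      _ = ∑ a, P * (E a)ᴴ * E a * P := by
          refine Finset.sum_congr rfl fun a _ => ?_
          rw [hLam a a]; simp
      _ = P * (∑ a, (E a)ᴴ * E a) * P := by
          simp only [Matrix.sum_mul, Matrix.mul_sum, Matrix.mul_assoc]
      _ = P := h1
  -- properties of the projections Pa
  have hPaH : ∀ a, (Pa a)ᴴ = Pa a := by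
    intro a
    rw [hPa]
    simp [Matrix.conjTranspose_mul, hPsa, Matrix.mul_assoc]
  have hPaUb : ∀ a b, Pa a * (U b * P) = if a = b then U a * P else 0 := by
    intro a b
    calc Pa a * (U b * P) = U a * (P * (U a)ᴴ * U b * P) := by
          rw [hPa]; simp only [Matrix.mul_assoc]
      _ = if a = b then U a * P else 0 := by
          rw [hPU]
          by_cases h : a = b
          · subst h; simp
          · simp [h]
  have hPaPb : ∀ a b, Pa a * Pa b = if a = b then Pa a else 0 := by
    intro a b
    calc Pa a * Pa b = Pa a * (U b * P) * (U b)ᴴ := by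
          rw [hPa b]; simp only [Matrix.mul_assoc]
      _ = if a = b then Pa a else 0 := by
          rw [hPaUb]
          by_cases h : a = b
          · subst h; simp [hPa]
          · simp [h]
  set S : Matrix d d ℂ := ∑ a, Pa a with hS
  have hSS : S * S = S := by
    rw [hS, Matrix.sum_mul]
    refine Finset.sum_congr rfl fun a _ => ?_
    rw [Matrix.mul_sum]
    rw [Finset.sum_eq_single a]
    · simp [hPaPb]
    · intro b _ hb; rw [hPaPb]; simp [Ne.symm hb]
    · intro h; exact absurd (Finset.mem_univ a) h
  have hSH : Sᴴ = S := by
    rw [hS, Matrix.conjTranspose_sum]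
    exact Finset.sum_congr rfl fun a _ => hPaH a
  refine ⟨⟨1 - S, ?_, ?_, ?_⟩, hLam, ?_, ?_⟩
  · rw [Matrix.sub_mul, Matrix.one_mul, hSS, sub_self]
  · -- trace preservation
    have h1 : ∀ a, ((U a)ᴴ * Pa a)ᴴ * ((U a)ᴴ * Pa a) = Pa a := by
      intro a
      rw [Matrix.conjTranspose_mul, Matrix.conjTranspose_conjTranspose, hPaH]
      calc Pa a * U a * ((U a)ᴴ * Pa a) = Pa a * (U a * (U a)ᴴ) * Pa a := by
            simp only [Matrix.mul_assoc]
        _ = Pa a := by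
            rw [(hU a).2, Matrix.mul_one]
            have := hPaPb a a
            simpa using this
    simp only [h1]
    rw [Matrix.conjTranspose_sub, Matrix.conjTranspose_one, hSH,
      Matrix.sub_mul, Matrix.one_mul, Matrix.mul_sub, Matrix.mul_one, hSS]
    abel
  · -- correction
    intro σ hσ
    -- Eop σ in terms of the unitaries
    have hEσ : Eop σ = ∑ b, ((starRingEnd ℂ) (c b) * c b) • (U b * σ * (U b)ᴴ) := by
      rw [hKraus]
      refine Finset.sum_congr rfl fun b _ => ?_
      have hl : E b * σ = c b • (U b * σ) := by
        conv_lhs => rw [hσ]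
        calc E b * (P * σ * P) = (E b * P) * (σ * P) := by simp only [Matrix.mul_assoc]
          _ = c b • (U b * (P * σ * P)) := by
              rw [hrestrict b]; simp only [Matrix.smul_mul, Matrix.mul_assoc]
          _ = c b • (U b * σ) := by rw [← hσ]
      have hr : σ * (E b)ᴴ = (starRingEnd ℂ) (c b) • (σ * (U b)ᴴ) := by
        conv_lhs => rw [hσ]
        calc P * σ * P * (E b)ᴴ = (P * σ) * (P * (E b)ᴴ) := by
              simp only [Matrix.mul_assoc]
          _ = (starRingEnd ℂ) (c b) • (P * σ * (P * (U b)ᴴ)) := by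
              rw [hPE b, Matrix.mul_smul, Matrix.mul_assoc]
          _ = (starRingEnd ℂ) (c b) • (P * σ * P * (U b)ᴴ) := by
              simp only [Matrix.mul_assoc]
          _ = (starRingEnd ℂ) (c b) • (σ * (U b)ᴴ) := by rw [← hσ]
      calc E b * σ * (E b)ᴴ = E b * (σ * (E b)ᴴ) := by rw [Matrix.mul_assoc]
        _ = (starRingEnd ℂ) (c b) • (E b * σ * (U b)ᴴ) := by
            rw [hr, Matrix.mul_smul, Matrix.mul_assoc]
        _ = ((starRingEnd ℂ) (c b) * c b) • (U b * σ * (U b)ᴴ) := by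
            rw [hl]
            simp only [Matrix.smul_mul, smul_smul]
    -- Pa a kills U b σ unless a = b
    have hPaUσ : ∀ a b, Pa a * (U b * σ) = if a = b then U a * σ else 0 := by
      intro a b
      calc Pa a * (U b * σ) = Pa a * (U b * P) * (σ * P) := by
            conv_lhs => rw [hσ]
            simp only [Matrix.mul_assoc]
        _ = if a = b then U a * σ else 0 := by
            rw [hPaUb]
            by_cases h : a = b
            · subst h
              simp only [if_pos rfl]
              conv_rhs => rw [hσ]
              simp only [Matrix.mul_assoc, if_true]
            · simp [h]
    have hσPa : ∀ a b, σ * (U b)ᴴ * Pa a = if a = b then σ * (U a)ᴴ else 0 := by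
      intro a b
      calc σ * (U b)ᴴ * Pa a
          = (P * σ) * ((P * (U b)ᴴ * U a * P) * (U a)ᴴ) := by
            conv_lhs => rw [hσ, hPa]
            simp only [Matrix.mul_assoc]
        _ = if a = b then σ * (U a)ᴴ else 0 := by
            rw [hPU]
            by_cases h : a = b
            · subst h
              simp only [if_pos rfl]
              conv_rhs => rw [hσ]
              simp only [Matrix.mul_assoc, if_true]
            · simp [h, Ne.symm h]
    have hmid : ∀ a, Pa a * Eop σ * Pa a
        = ((starRingEnd ℂ) (c a) * c a) • (U a * (σ * (U a)ᴴ)) := by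
      intro a
      rw [hEσ, Matrix.mul_sum, Matrix.sum_mul]
      rw [Finset.sum_eq_single a]
      · rw [Matrix.mul_smul, Matrix.smul_mul]
        congr 1
        calc Pa a * (U a * σ * (U a)ᴴ) * Pa a
            = Pa a * (U a * σ) * ((U a)ᴴ * Pa a) := by simp only [Matrix.mul_assoc]
          _ = U a * σ * ((U a)ᴴ * Pa a) := by rw [hPaUσ]; simp
          _ = U a * (σ * (U a)ᴴ * Pa a) := by simp only [Matrix.mul_assoc]
          _ = U a * (σ * (U a)ᴴ) := by rw [hσPa]; simp
      · intro b _ hb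
        rw [Matrix.mul_smul, Matrix.smul_mul]
        have : Pa a * (U b * σ * (U b)ᴴ) * Pa a = 0 := by
          calc Pa a * (U b * σ * (U b)ᴴ) * Pa a
              = Pa a * (U b * σ) * ((U b)ᴴ * Pa a) := by simp only [Matrix.mul_assoc]
            _ = 0 := by rw [hPaUσ]; simp [Ne.symm hb]
        rw [this, smul_zero]
      · intro h; exact absurd (Finset.mem_univ a) h
    have hterm : ∀ a, ((U a)ᴴ * Pa a) * Eop σ * ((U a)ᴴ * Pa a)ᴴ
        = ((starRingEnd ℂ) (c a) * c a) • σ := by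
      intro a
      rw [Matrix.conjTranspose_mul, Matrix.conjTranspose_conjTranspose, hPaH]
      calc (U a)ᴴ * Pa a * Eop σ * (Pa a * U a)
          = (U a)ᴴ * (Pa a * Eop σ * Pa a) * U a := by simp only [Matrix.mul_assoc]
        _ = ((starRingEnd ℂ) (c a) * c a) •
            ((U a)ᴴ * (U a * (σ * (U a)ᴴ)) * U a) := by
            rw [hmid, Matrix.mul_smul, Matrix.smul_mul]
        _ = ((starRingEnd ℂ) (c a) * c a) •
            (((U a)ᴴ * U a) * σ * ((U a)ᴴ * U a)) := by
            simp only [Matrix.mul_assoc]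
        _ = ((starRingEnd ℂ) (c a) * c a) • σ := by
            rw [(hU a).1, Matrix.one_mul, Matrix.mul_one]
    have hSE : ∀ b, S * (U b * σ) = U b * σ := by
      intro b
      rw [hS, Matrix.sum_mul, Finset.sum_eq_single b]
      · rw [hPaUσ]; simp
      · intro a _ ha; rw [hPaUσ]; simp [ha]
      · intro h; exact absurd (Finset.mem_univ b) h
    have hQE : (1 - S) * Eop σ = 0 := by
      rw [hEσ, Matrix.mul_sum]
      refine Finset.sum_eq_zero fun b _ => ?_
      rw [Matrix.mul_smul]
      have h0 : (1 - S) * (U b * σ * (U b)ᴴ) = 0 := by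
        calc (1 - S) * (U b * σ * (U b)ᴴ)
            = ((1 - S) * (U b * σ)) * (U b)ᴴ := by simp only [Matrix.mul_assoc]
          _ = 0 := by
              rw [Matrix.sub_mul, Matrix.one_mul, hSE, sub_self, Matrix.zero_mul]
      rw [h0, smul_zero]
    have hfin : (∑ a, (starRingEnd ℂ) (c a) * c a) • σ = σ := by
      conv_lhs => rw [hσ]
      calc (∑ a, (starRingEnd ℂ) (c a) * c a) • (P * σ * P)
          = ((∑ a, (starRingEnd ℂ) (c a) * c a) • P) * (σ * P) := by
            simp only [Matrix.smul_mul, Matrix.mul_assoc]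
        _ = P * (σ * P) := by rw [hsumc]
        _ = σ := by rw [← Matrix.mul_assoc, ← hσ]
    calc (∑ a, ((U a)ᴴ * Pa a) * Eop σ * ((U a)ᴴ * Pa a)ᴴ) + (1 - S) * Eop σ * (1 - S)ᴴ
        = (∑ a, ((starRingEnd ℂ) (c a) * c a) • σ) + 0 := by
          rw [hQE, Matrix.zero_mul]
          congr 1
          exact Finset.sum_congr rfl fun a _ => hterm a
      _ = σ := by rw [add_zero, ← Finset.sum_smul, hfin]
  · -- positive semidefinite
    have hd : (Matrix.of fun a b : ι =>
        if a = b then (starRingEnd ℂ) (c a) * c a else 0)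
        = Matrix.diagonal (fun a => (starRingEnd ℂ) (c a) * c a) := by
      ext a b
      by_cases h : a = b
      · subst h; simp
      · simp [Matrix.diagonal, h]
    rw [hd]
    refine Matrix.posSemidef_diagonal_iff.mpr fun a => ?_
    simpa using star_mul_self_nonneg (c a)
  · intro a b hab
    simp [hab]
end
end

section
/- Let H = (H^A ⊗ H^B) ⊕ K with dim H^A = m, let E = {E_a} be a quantum operation on B(H), and for each a, k define E_{a,k} : H^B → H by E_{a,k}(ξ) = E_a P_𝔄 (α_k ⊗ ξ), and let E_B : B(H^B) → B(H) be the completely positive map E_B(ρ^B) = (1/m) Σ_{a,k} E_{a,k} ρ^B E_{a,k}†. Suppose R : B(H) → B(H^B) is a quantum operation with (R ∘ E_B)(ρ^B) = ρ^B for all ρ^B ∈ B(H^B). Then (R ∘ E)(1^A ⊗ ρ^B) = m ρ^B for all ρ^B ∈ B(H^B); consequently, with the ampliation I_𝔄 : B(H^B) → B(H), I_𝔄(ρ^B) = (1/m)(1^A ⊗ ρ^B), the map R' = I_𝔄 ∘ R satisfies (R' ∘ E)(1^A ⊗ ρ^B) = 1^A ⊗ ρ^B for all ρ^B ∈ B(H^B).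 -/
open scoped Kronecker Matrix

noncomputable section

/-- The isometry `|α_k⟩ : H^B → H`, `ξ ↦ α_k ⊗ ξ ∈ H^A ⊗ H^B ⊆ H`, as a matrix. -/
def ket {m : ℕ} (n p : ℕ) (k : Fin m) : Matrix (HIdx m n p) (Fin n) ℂ :=
  Matrix.of fun x j =>
    match x with
    | Sum.inl (k', i) => if k' = k ∧ i = j then 1 else 0
    | Sum.inr _ => 0

/-- Quantum operation from `B(d₁)` to `B(d₂)`: Kraus representation with `Σ K†K = 1`. -/
def IsQuantumOperationHom {d₁ d₂ : Type} [Fintype d₁] [DecidableEq d₁]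
    [Fintype d₂] [DecidableEq d₂]
    (E : Matrix d₁ d₁ ℂ →ₗ[ℂ] Matrix d₂ d₂ ℂ) : Prop :=
  ∃ (ι : Type) (_ : Fintype ι) (K : ι → Matrix d₂ d₁ ℂ),
    (∀ ρ, E ρ = ∑ i, K i * ρ * (K i)ᴴ) ∧ ∑ i, (K i)ᴴ * K i = 1


lemma PA_mul_ket {m n p : ℕ} (k : Fin m) : PA m n p * ket n p k = ket n p k := by
  ext x j
  cases x with
  | inl q =>
    simp only [PA, embed, ket, Matrix.mul_apply, Matrix.fromBlocks, Fintype.sum_sum_type,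
      Matrix.one_apply, Matrix.of_apply, Sum.elim_inl, Sum.elim_inr, Matrix.zero_apply,
      zero_mul, mul_zero, Finset.sum_const_zero, add_zero]
    rw [Finset.sum_eq_single q]
    · simp
    · intro b _ hb
      simp [Ne.symm hb]
    · simp
  | inr q =>
    simp [PA, embed, ket, Matrix.mul_apply, Matrix.fromBlocks, Fintype.sum_sum_type]

lemma sum_ket {m n p : ℕ} (ρB : Matrix (Fin n) (Fin n) ℂ) :
    ∑ k : Fin m, ket n p k * ρB * (ket n p k)ᴴ =
      embed (p := p) ((1 : Matrix (Fin m) (Fin m) ℂ) ⊗ₖ ρB) := by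
  ext x y
  cases x with
  | inl q =>
    cases y with
    | inl r =>
      obtain ⟨k1, i1⟩ := q
      obtain ⟨k2, j2⟩ := r
      simp only [embed, ket, Matrix.mul_apply, Matrix.fromBlocks, Matrix.kroneckerMap_apply,
        Matrix.one_apply, Matrix.conjTranspose_apply, Matrix.sum_apply, Matrix.of_apply,
        Sum.elim_inl, ite_and, apply_ite, map_one, map_zero, star_one, star_zero,
        ite_mul, mul_ite, one_mul, mul_one, zero_mul, mul_zero, Finset.sum_ite_eq,
        Finset.sum_ite_eq', Finset.mem_univ, if_true, Finset.sum_const_zero]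
      split_ifs with h <;> simp [h, Finset.sum_ite_eq, Finset.sum_ite_eq']
    | inr r =>
      simp [embed, ket, Matrix.mul_apply, Matrix.fromBlocks, Matrix.sum_apply,
        Matrix.conjTranspose_apply]
  | inr q =>
    cases y <;>
      simp [embed, ket, Matrix.mul_apply, Matrix.fromBlocks, Matrix.sum_apply]

lemma embed_smul {m n p : ℕ} (c : ℂ) (M : Matrix (Fin m × Fin n) (Fin m × Fin n) ℂ) :
    embed (p := p) (c • M) = c • embed M := by
  ext x y
  cases x <;> cases y <;> simp [embed, Matrix.fromBlocks]

lemma embed_zero_of_m_eq_zero {n p : ℕ} (M : Matrix (Fin 0 × Fin n) (Fin 0 × Fin n) ℂ) :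
    embed (p := p) M = 0 := by
  ext x y
  cases x with
  | inl q => exact q.1.elim0
  | inr q => cases y <;> simp [embed, Matrix.fromBlocks]

/-- If `R : B(H) → B(H^B)` corrects the averaged map
`E_B(ρ^B) = (1/m) Σ_{a,k} E_{a,k} ρ^B E_{a,k}†`, then `(R ∘ E)(1^A ⊗ ρ^B) = m ρ^B`, and
`R' = I_𝔄 ∘ R` with the ampliation `I_𝔄(ρ^B) = (1/m)(1^A ⊗ ρ^B)` satisfies
`(R' ∘ E)(1^A ⊗ ρ^B) = 1^A ⊗ ρ^B`. -/
theorem recovery_from_averaged_map {m n p : ℕ} {ι : Type} [Fintype ι]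
    (Eop : Matrix (HIdx m n p) (HIdx m n p) ℂ →ₗ[ℂ] Matrix (HIdx m n p) (HIdx m n p) ℂ)
    (E : ι → Matrix (HIdx m n p) (HIdx m n p) ℂ)
    (hKraus : ∀ ρ, Eop ρ = ∑ a, E a * ρ * (E a)ᴴ)
    (hTP : ∑ a, (E a)ᴴ * E a = 1)
    (R : Matrix (HIdx m n p) (HIdx m n p) ℂ →ₗ[ℂ] Matrix (Fin n) (Fin n) ℂ)
    (hR : IsQuantumOperationHom R)
    (hRcorr : ∀ ρB : Matrix (Fin n) (Fin n) ℂ,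
      R ((1 / (m : ℂ)) • ∑ a : ι, ∑ k : Fin m,
        (E a * PA m n p * ket n p k) * ρB * (E a * PA m n p * ket n p k)ᴴ) = ρB) :
    (∀ ρB : Matrix (Fin n) (Fin n) ℂ,
      R (Eop (embed ((1 : Matrix (Fin m) (Fin m) ℂ) ⊗ₖ ρB))) = (m : ℂ) • ρB) ∧
    (∀ ρB : Matrix (Fin n) (Fin n) ℂ,
      (1 / (m : ℂ)) • embed (p := p) ((1 : Matrix (Fin m) (Fin m) ℂ) ⊗ₖ
          R (Eop (embed ((1 : Matrix (Fin m) (Fin m) ℂ) ⊗ₖ ρB)))) =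
        embed ((1 : Matrix (Fin m) (Fin m) ℂ) ⊗ₖ ρB)) := by
  have hsum : ∀ ρB : Matrix (Fin n) (Fin n) ℂ,
      (∑ a : ι, ∑ k : Fin m,
        (E a * PA m n p * ket n p k) * ρB * (E a * PA m n p * ket n p k)ᴴ) =
      Eop (embed ((1 : Matrix (Fin m) (Fin m) ℂ) ⊗ₖ ρB)) := by
    intro ρB
    rw [hKraus, ← sum_ket]
    refine Finset.sum_congr rfl fun a _ => ?_
    rw [Finset.mul_sum, Finset.sum_mul]
    refine Finset.sum_congr rfl fun k _ => ?_
    rw [Matrix.mul_assoc (E a), PA_mul_ket, Matrix.conjTranspose_mul]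
    simp [Matrix.mul_assoc]
  rcases Nat.eq_zero_or_pos m with hm | hm
  · subst hm
    have hz : ∀ ρB : Matrix (Fin n) (Fin n) ℂ,
        embed (p := p) ((1 : Matrix (Fin 0) (Fin 0) ℂ) ⊗ₖ ρB) = 0 := fun ρB =>
      embed_zero_of_m_eq_zero _
    constructor
    · intro ρB
      simp [hz]
    · intro ρB
      simp [hz]
  · have hm' : (m : ℂ) ≠ 0 := Nat.cast_ne_zero.mpr hm.ne'
    have first : ∀ ρB : Matrix (Fin n) (Fin n) ℂ,
        R (Eop (embed ((1 : Matrix (Fin m) (Fin m) ℂ) ⊗ₖ ρB))) = (m : ℂ) • ρB := by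
      intro ρB
      have h := hRcorr ρB
      rw [hsum ρB] at h
      calc R (Eop (embed ((1 : Matrix (Fin m) (Fin m) ℂ) ⊗ₖ ρB)))
          = R ((m : ℂ) • ((1 / (m : ℂ)) •
              Eop (embed ((1 : Matrix (Fin m) (Fin m) ℂ) ⊗ₖ ρB)))) := by
            rw [smul_smul, mul_one_div_cancel hm', one_smul]
        _ = (m : ℂ) • ρB := by rw [map_smul, h]
    refine ⟨first, fun ρB => ?_⟩
    rw [first ρB, Matrix.kronecker_smul, embed_smul, smul_smul,
      one_div_mul_cancel hm', one_smul]
end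
end
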